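/- arXiv:1102.0552 — 3 statements merged into one kernel-verified Lean document; each statement's English description precedes it below -/
import Mathlib

section
/- There is no function f : ℕ → ℕ such that every graph G with δ^{V,Ω}(G) ≥ f(k) contains K_k as a minor. In particular, there exists a planar graph G with every vertex of infinite degree and every end of infinite relative degree (so δ^{V,Ω}(G) = ℵ₀), which has no complete minor of order greater than 4. -/
open scoped ENNReal

namespace Paper

variable {V : Type*} {W : Type*}

/-- Reachability in `G` by a walk avoiding the vertex set `S`. -/
def ReachAvoid (G : SimpleGraph V) (S : Set V) (u v : V) : Prop :=
  ∃ p : G.Walk u v, ∀ x ∈ p.support, x ∉ S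

/-- A ray (one-way infinite path) in `G`. -/
structure IsRay (G : SimpleGraph V) (f : ℕ → V) : Prop where
  inj : Function.Injective f
  adj : ∀ n, G.Adj (f n) (f (n + 1))

/-- Two rays are equivalent (belong to the same end) if no finite vertex set
separates them: for every finite `S` some vertex of the first ray can be joined
to some vertex of the second by a walk avoiding `S`. -/
def EquivRay (G : SimpleGraph V) (f g : ℕ → V) : Prop :=
  ∀ S : Set V, S.Finite → ∃ m n, ReachAvoid G S (f m) (g n)

/-- The set of ends of `G`: rays modulo equivalence. -/
def Ends (G : SimpleGraph V) :=
  Quot (fun f g : {f : ℕ → V // IsRay G f} => EquivRay G f.1 g.1)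

/-- `v` dominates the ray `f`: there are infinitely many `v`–`V(f)` paths
pairwise disjoint except in `v`. -/
def DominatesRay (G : SimpleGraph V) (v : V) (f : ℕ → V) : Prop :=
  ∃ (g : ℕ → ℕ) (p : ∀ n, G.Walk v (f (g n))),
    Function.Injective g ∧ (∀ n, (p n).IsPath) ∧
    ∀ m n, m ≠ n → ∀ x ∈ (p m).support, x ∈ (p n).support → x = v

/-- The set of vertices dominating the end of the ray `r`. -/
def Dom (G : SimpleGraph V) (r : ℕ → V) : Set V := {v | DominatesRay G v r}

/-- Vertex-boundary of the vertex set `A`. -/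
def vBoundary (G : SimpleGraph V) (A : Set V) : Set V :=
  {x | x ∈ A ∧ ∃ y, y ∉ A ∧ G.Adj x y}

/-- Edge-boundary of the vertex set `A`. -/
def eBoundary (G : SimpleGraph V) (A : Set V) : Set (Sym2 V) :=
  {e | ∃ x y, x ∈ A ∧ y ∉ A ∧ G.Adj x y ∧ e = s(x, y)}

/-- `S` is a `V'`–`Ω(A)` separator: `V' ⊄ S` and no component of `G - S`
contains both a vertex of `V'` and (the tail of) a ray lying in `A`. -/
def SepVertsEndsIn (G : SimpleGraph V) (V' S A : Set V) : Prop :=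
  ¬ V' ⊆ S ∧ ∀ v ∈ V', ∀ f : ℕ → V, IsRay G f → Set.range f ⊆ A →
    ∀ n, (∀ m, n ≤ m → f m ∉ S) → ¬ ReachAvoid G S v (f n)

/-- `S` is an inclusion-minimal `V'`–`Ω(A)` separator. -/
def MinSepVertsEndsIn (G : SimpleGraph V) (V' S A : Set V) : Prop :=
  SepVertsEndsIn G V' S A ∧ ∀ S' ⊂ S, ¬ SepVertsEndsIn G V' S' A

/-- The graph `G_ω`: `G` minus the dominating vertices of the end of `r`. -/
def Gmin (G : SimpleGraph V) (r : ℕ → V) : SimpleGraph ((Dom G r)ᶜ : Set V) :=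
  G.induce ((Dom G r)ᶜ : Set V)

/-- A ray of `G_ω` belonging to (the unique end `ω̂` induced by) the end `ω` of
the ray `r`. -/
def InDeletedEnd (G : SimpleGraph V) (r : ℕ → V)
    (f : ℕ → ((Dom G r)ᶜ : Set V)) : Prop :=
  IsRay (Gmin G r) f ∧ EquivRay G (fun n => (f n : V)) r

/-- An `ω̂`-region of `G_ω`: induced connected, finite vertex-boundary,
containing a ray of `ω̂`. -/
def IsOmegaRegion (G : SimpleGraph V) (r : ℕ → V)
    (A : Set ((Dom G r)ᶜ : Set V)) : Prop :=
  ((Gmin G r).induce A).Connected ∧ (vBoundary (Gmin G r) A).Finite ∧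
    ∃ f, InDeletedEnd G r f ∧ Set.range f ⊆ A

/-- `(Ĥ_i) → ω̂` : a sequence of distinct nested `ω̂`-regions whose
vertex-boundaries are minimal separators. -/
def Converges (G : SimpleGraph V) (r : ℕ → V)
    (A : ℕ → Set ((Dom G r)ᶜ : Set V)) : Prop :=
  Function.Injective A ∧ (∀ i, IsOmegaRegion G r (A i)) ∧
    (∀ i, A (i + 1) ⊆ A i \ vBoundary (Gmin G r) (A i)) ∧
    (∀ i, MinSepVertsEndsIn (Gmin G r) (vBoundary (Gmin G r) (A i))
      (vBoundary (Gmin G r) (A (i + 1))) (A (i + 1)))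

/-- The ratio `|∂_e A| / |∂_v A|`, as an extended nonnegative real. -/
noncomputable def bratio (G : SimpleGraph V) (A : Set V) : ℝ≥0∞ :=
  ((eBoundary G A).encard : ℝ≥0∞) / ((vBoundary G A).encard : ℝ≥0∞)

open Classical in
/-- The relative degree `d_{e/v}` of the end of the ray `r`. -/
noncomputable def relDegree (G : SimpleGraph V) (r : ℕ → V) : ℝ≥0∞ :=
  if (Dom G r).Infinite ∨ ¬ ∃ f, InDeletedEnd G r f then
    ((Dom G r).encard : ℝ≥0∞)
  else
    ((Dom G r).encard : ℝ≥0∞) +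
      ⨅ A : {A : ℕ → Set ((Dom G r)ᶜ : Set V) // Converges G r A},
        Filter.atTop.liminf fun i => bratio (Gmin G r) (A.1 i)

/-- The degree of a vertex, as an extended real. -/
noncomputable def degER (G : SimpleGraph V) (v : V) : EReal :=
  (((G.neighborSet v).encard : ℝ≥0∞) : EReal)

/-- A subdivision of `K_k` in `G` with branching vertices `b 0, …, b (k-1)`. -/
def HasTKOn (G : SimpleGraph V) {k : ℕ} (b : Fin k ↪ V) : Prop :=
  ∃ p : ∀ i j : Fin k, G.Walk (b i) (b j),
    (∀ i j, i ≠ j → (p i j).IsPath) ∧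
    (∀ i j, i ≠ j → ∀ x ∈ (p i j).support, x ∈ Set.range b → x = b i ∨ x = b j) ∧
    (∀ i j i' j', i ≠ j → i' ≠ j' → s(i, j) ≠ s(i', j') →
      ∀ x ∈ (p i j).support, x ∈ (p i' j').support → x ∈ Set.range b)

/-- `K_k` is a topological minor of `G`. -/
def HasTopK (G : SimpleGraph V) (k : ℕ) : Prop :=
  ∃ b : Fin k ↪ V, HasTKOn G b

/-- A subdivision of `K_{ℵ₀}` in `G` with branching vertices `b 0, b 1, …`. -/
def HasTKInfOn (G : SimpleGraph V) (b : ℕ ↪ V) : Prop :=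
  ∃ p : ∀ i j : ℕ, G.Walk (b i) (b j),
    (∀ i j, i ≠ j → (p i j).IsPath) ∧
    (∀ i j, i ≠ j → ∀ x ∈ (p i j).support, x ∈ Set.range b → x = b i ∨ x = b j) ∧
    (∀ i j i' j', i ≠ j → i' ≠ j' → s(i, j) ≠ s(i', j') →
      ∀ x ∈ (p i j).support, x ∈ (p i' j').support → x ∈ Set.range b)

/-- `K_k` is a minor of `G` (with finite branch sets). -/
def HasKMinor (G : SimpleGraph V) (k : ℕ) : Prop :=
  ∃ B : Fin k → Finset V,
    (∀ i, (B i).Nonempty) ∧ (∀ i j, i ≠ j → Disjoint (B i) (B j)) ∧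
    (∀ i, (G.induce (B i : Set V)).Connected) ∧
    (∀ i j, i ≠ j → ∃ x ∈ B i, ∃ y ∈ B j, G.Adj x y)

/-- The average degree of the finite induced subgraph of `G` on `s`. -/
noncomputable def avgDegOn (G : SimpleGraph V) (s : Finset V) : ℝ :=
  (∑ v ∈ s, ((G.neighborSet v ∩ ↑s).ncard : ℝ)) / s.card

/-- `G` is rayless. -/
def Rayless (G : SimpleGraph V) : Prop := ¬ ∃ f : ℕ → V, IsRay G f

/-- The average degree of the vertex set `F` into `A` in `G`. -/
noncomputable def avgDegIn (G : SimpleGraph V) (A F : Set V) : ℝ :=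
  (∑ᶠ v ∈ F, ((G.neighborSet v ∩ A).ncard : ℝ)) / F.ncard


/-! ### Auxiliary construction: the witness graph -/

namespace Witness

/-- The witness graph on finite sequences of naturals: `x` is adjacent to
`a :: x` (its "children") and to `a :: b :: x` (its "grandchildren"). -/
def myG : SimpleGraph (List ℕ) where
  Adj x y := (∃ a, y = a :: x) ∨ (∃ a, x = a :: y) ∨
    (∃ a b, y = a :: b :: x) ∨ (∃ a b, x = a :: b :: y)
  symm := by
    constructor
    intro x y h
    rcases h with ⟨a, h⟩ | ⟨a, h⟩ | ⟨a, b, h⟩ | ⟨a, b, h⟩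
    · exact Or.inr (Or.inl ⟨a, h⟩)
    · exact Or.inl ⟨a, h⟩
    · exact Or.inr (Or.inr (Or.inr ⟨a, b, h⟩))
    · exact Or.inr (Or.inr (Or.inl ⟨a, b, h⟩))
  loopless := by
    constructor
    intro x h
    rcases h with ⟨a, h⟩ | ⟨a, h⟩ | ⟨a, b, h⟩ | ⟨a, b, h⟩ <;>
      · have := congrArg List.length h
        simp only [List.length_cons] at this
        omega

lemma adj_cons (a : ℕ) (x : List ℕ) : myG.Adj x (a :: x) := Or.inl ⟨a, rfl⟩

lemma suffix_eq_of_length {z z' w : List ℕ} (h : z <:+ w) (h' : z' <:+ w)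
    (hl : z.length = z'.length) : z = z' := by
  rcases List.suffix_or_suffix_of_suffix h h' with hs | hs
  · exact hs.sublist.eq_of_length hl
  · exact (hs.sublist.eq_of_length hl.symm).symm

lemma strict_suffix_length {z m : List ℕ} (h : z <:+ m) (hne : z ≠ m) :
    z.length < m.length := by
  rcases lt_or_eq_of_le h.length_le with h1 | h1
  · exact h1
  · exact absurd (h.sublist.eq_of_length h1) hne

lemma adj_cases {x y : List ℕ} (h : myG.Adj x y) :
    (x <:+ y ∧ x ≠ y ∧ y.length ≤ x.length + 2) ∨
    (y <:+ x ∧ y ≠ x ∧ x.length ≤ y.length + 2) := by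
  have hlen : ∀ u : List ℕ, ∀ a : ℕ, u ≠ a :: u := by
    intro u a hcontra
    have := congrArg List.length hcontra
    simp only [List.length_cons] at this
    omega
  have hlen2 : ∀ u : List ℕ, ∀ a b : ℕ, u ≠ a :: b :: u := by
    intro u a b hcontra
    have := congrArg List.length hcontra
    simp only [List.length_cons] at this
    omega
  rcases h with ⟨a, rfl⟩ | ⟨a, rfl⟩ | ⟨a, b, rfl⟩ | ⟨a, b, rfl⟩
  · exact Or.inl ⟨List.suffix_cons a x, fun h => hlen x a h, by simp⟩
  · exact Or.inr ⟨List.suffix_cons a y, fun h => hlen y a h, by simp⟩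
  · exact Or.inl ⟨(List.suffix_cons b x).trans (List.suffix_cons a (b :: x)),
      fun h => hlen2 x a b h, by simp⟩
  · exact Or.inr ⟨(List.suffix_cons b y).trans (List.suffix_cons a (b :: y)),
      fun h => hlen2 y a b h, by simp⟩

/-- Crossing an edge into the "subtree" of `m` forces the outer endpoint to be
a close strict ancestor of `m`. -/
lemma adj_cross {m x y : List ℕ} (h : myG.Adj x y) (hx : ¬ m <:+ x) (hy : m <:+ y) :
    x <:+ m ∧ x ≠ m ∧ m.length ≤ x.length + 2 := by
  rcases adj_cases h with ⟨h1, _, h3⟩ | ⟨h1, _, _⟩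
  · rcases List.suffix_or_suffix_of_suffix h1 hy with hs | hs
    · refine ⟨hs, ?_, le_trans hy.length_le h3⟩
      rintro rfl; exact hx (List.suffix_refl x)
    · exact absurd hs hx
  · exact absurd (hy.trans h1) hx

/-- Crossing a walk into the subtree of `m` forces some vertex of the walk to be
a close strict ancestor of `m`. -/
lemma walk_cross {m v : List ℕ} : ∀ {u : List ℕ} (p : myG.Walk u v),
    ¬ m <:+ u → m <:+ v →
    ∃ z ∈ p.support, z <:+ m ∧ z ≠ m ∧ m.length ≤ z.length + 2 := by
  intro u p
  induction p with
  | nil => exact fun hu hv => absurd hv hu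
  | @cons a b c h q ih =>
    intro hu hv
    by_cases hw : m <:+ b
    · exact ⟨a, by simp, adj_cross h hu hw⟩
    · obtain ⟨z, hz, hzp⟩ := ih hw hv
      exact ⟨z, by simp [hz], hzp⟩

lemma first_exit {P : ℕ → Prop} {a b : ℕ} (hab : a ≤ b) (ha : P a) (hb : ¬ P b) :
    ∃ j, a ≤ j ∧ j < b ∧ P j ∧ ¬ P (j + 1) := by
  by_contra h
  push_neg at h
  have key : ∀ d, a + d ≤ b → P (a + d) := by
    intro d
    induction d with
    | zero => exact fun _ => ha
    | succ n ih =>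
      intro hle
      exact h (a + n) (by omega) (by omega) (ih (by omega))
  have := key (b - a) (by omega)
  rw [show a + (b - a) = b by omega] at this
  exact hb this

lemma cons_suffix_aux (m : List ℕ) : ∀ s : List ℕ, s ≠ [] → ∃ t, t :: m <:+ s ++ m := by
  intro s
  induction s with
  | nil => exact fun h => absurd rfl h
  | cons hd tl ih =>
    intro _
    cases tl with
    | nil => exact ⟨hd, by simp⟩
    | cons h2 t2 =>
      obtain ⟨t, ht⟩ := ih (by simp)
      refine ⟨t, ht.trans ?_⟩
      simp only [List.cons_append]
      exact List.suffix_cons hd ((h2 :: t2) ++ m)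

lemma exists_cons_suffix {m x : List ℕ} (h : m <:+ x) (hne : x ≠ m) :
    ∃ t, t :: m <:+ x := by
  obtain ⟨s, rfl⟩ := h
  have hs : s ≠ [] := by rintro rfl; simp at hne
  exact cons_suffix_aux m s hs

section Ray

variable {r : ℕ → List ℕ} (hr : Paper.IsRay myG r)

include hr

/-- Along any ray, the length of the vertices tends to infinity. -/
lemma ray_eventually_long : ∀ L, ∃ N, ∀ n, N ≤ n → L ≤ (r n).length := by
  intro L
  induction L with
  | zero => exact ⟨0, fun n _ => Nat.zero_le _⟩
  | succ L ihL =>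
    obtain ⟨N, hN⟩ := ihL
    have claim : ∀ n1 n2, N ≤ n1 → n1 < n2 → (r n1).length = L →
        (r n2).length = L → False := by
      intro n1 n2 hn1 hlt hl1 hl2
      have hne : r n1 ≠ r n2 := fun h => by
        have := hr.inj h; omega
      have hP1 : r n1 <:+ r n1 := List.suffix_refl _
      have hP2 : ¬ r n1 <:+ r n2 := by
        intro h
        exact hne (h.sublist.eq_of_length (by omega))
      obtain ⟨j, hj1, hj2, hPj, hPj1⟩ :=
        first_exit (P := fun j => r n1 <:+ r j) (le_of_lt hlt) hP1 hP2
      have hcross := adj_cross (myG.adj_symm (hr.adj j)) hPj1 hPj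
      have hlt' : (r (j + 1)).length < (r n1).length :=
        strict_suffix_length hcross.1 hcross.2.1
      have := hN (j + 1) (by omega)
      omega
    by_cases he : ∃ n, N ≤ n ∧ (r n).length = L
    · obtain ⟨n0, hn0, hln0⟩ := he
      refine ⟨n0 + 1, fun n hn => ?_⟩
      have h1 : L ≤ (r n).length := hN n (by omega)
      by_cases h2 : (r n).length = L
      · exact absurd (claim n0 n hn0 (by omega) hln0 h2) (fun h => h)
      · omega
    · push_neg at he
      refine ⟨N, fun n hn => ?_⟩
      have h1 := hN n hn
      have h2 := he n hn
      omega

/-- Arbitrarily deep subtrees eventually containing the ray. -/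
lemma ray_limit : ∀ K, ∃ m : List ℕ, K ≤ m.length ∧ ∃ N, ∀ n, N ≤ n → m <:+ r n := by
  intro K
  induction K with
  | zero => exact ⟨[], le_refl _, 0, fun n _ => List.nil_suffix⟩
  | succ K ihK =>
    obtain ⟨m, hK, N, hN⟩ := ihK
    obtain ⟨N1, hN1⟩ := ray_eventually_long hr (m.length + 1)
    set M := max N N1 with hM
    have hMl : ∀ n, M ≤ n → m <:+ r n ∧ m.length + 1 ≤ (r n).length := fun n hn =>
      ⟨hN n (le_trans (le_max_left _ _) hn), hN1 n (le_trans (le_max_right _ _) hn)⟩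
    have hchild : ∀ n, M ≤ n → ∃ t, t :: m <:+ r n := by
      intro n hn
      obtain ⟨h1, h2⟩ := hMl n hn
      refine exists_cons_suffix h1 (fun h => ?_)
      rw [h] at h2; omega
    obtain ⟨t0, ht0⟩ := hchild M le_rfl
    have hconst : ∀ n, M ≤ n → t0 :: m <:+ r n := by
      intro n hn
      induction n, hn using Nat.le_induction with
      | base => exact ht0
      | succ n hn ih =>
        obtain ⟨t', ht'⟩ := hchild (n + 1) (by omega)
        rcases adj_cases (hr.adj n) with ⟨hsub, _, _⟩ | ⟨hsub, _, _⟩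
        · exact ih.trans hsub
        · have h2 : t' :: m <:+ r n := ht'.trans hsub
          have heq : t0 :: m = t' :: m := suffix_eq_of_length ih h2 (by simp)
          rw [heq]; exact ht'
    exact ⟨t0 :: m, by simp; omega, M, hconst⟩

/-- No vertex dominates any ray of the witness graph. -/
lemma dom_empty : Paper.Dom myG r = ∅ := by
  ext v
  simp only [Paper.Dom, Set.mem_setOf_eq, Set.mem_empty_iff_false, iff_false]
  rintro ⟨g, p, hg, _, hdisj⟩
  obtain ⟨m, hm, N, hN⟩ := ray_limit hr (v.length + 3)
  have hvm : ¬ m <:+ v := fun h => by have := h.length_le; omega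
  have hfin : (g ⁻¹' (Set.Iio N)).Finite :=
    Set.Finite.preimage hg.injOn (Set.finite_Iio N)
  have hinf : {n | N ≤ g n}.Infinite := by
    have hcomp : {n | N ≤ g n} = (g ⁻¹' (Set.Iio N))ᶜ := by
      ext n; simp [not_lt]
    rw [hcomp]
    exact hfin.infinite_compl
  obtain ⟨n1, hn1⟩ := hinf.nonempty
  obtain ⟨n2, hn2⟩ := (hinf.diff (Set.finite_singleton n1)).nonempty
  obtain ⟨n3, hn3⟩ := (hinf.diff ((Set.finite_singleton n1).insert n2)).nonempty
  have hne12 : n1 ≠ n2 := fun h => hn2.2 (by simp [h])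
  have hne13 : n1 ≠ n3 := fun h => hn3.2 (by simp [h])
  have hne23 : n2 ≠ n3 := fun h => hn3.2 (by simp [h])
  have key : ∀ n, N ≤ g n → ∃ z ∈ (p n).support,
      z <:+ m ∧ z ≠ m ∧ m.length ≤ z.length + 2 :=
    fun n hn => walk_cross (p n) hvm (hN _ hn)
  obtain ⟨z1, hz1s, hz1⟩ := key n1 hn1
  obtain ⟨z2, hz2s, hz2⟩ := key n2 hn2.1
  obtain ⟨z3, hz3s, hz3⟩ := key n3 hn3.1
  have hzlen : ∀ z : List ℕ, z <:+ m → z ≠ m → m.length ≤ z.length + 2 →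
      z.length + 1 = m.length ∨ z.length + 2 = m.length := by
    intro z h1 h2 h3
    have := strict_suffix_length h1 h2
    omega
  have hfinal : ∀ (za zb : List ℕ) (a b : ℕ), a ≠ b →
      za ∈ (p a).support → zb ∈ (p b).support →
      za <:+ m → zb <:+ m → za.length = zb.length →
      m.length ≤ za.length + 2 → False := by
    intro za zb a b hab hsa hsb h1 h2 hl hle
    have heq : za = zb := suffix_eq_of_length h1 h2 hl
    have hveq : za = v := hdisj a b hab za hsa (heq ▸ hsb)
    rw [hveq] at hle
    omega
  have htri : z1.length = z2.length ∨ z1.length = z3.length ∨ z2.length = z3.length := by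
    rcases hzlen z1 hz1.1 hz1.2.1 hz1.2.2 with e1 | e1 <;>
      rcases hzlen z2 hz2.1 hz2.2.1 hz2.2.2 with e2 | e2 <;>
      rcases hzlen z3 hz3.1 hz3.2.1 hz3.2.2 with e3 | e3 <;> omega
  rcases htri with h | h | h
  · exact hfinal z1 z2 n1 n2 hne12 hz1s hz2s hz1.1 hz2.1 h hz1.2.2
  · exact hfinal z1 z3 n1 n3 hne13 hz1s hz3s hz1.1 hz3.1 h hz1.2.2
  · exact hfinal z2 z3 n2 n3 hne23 hz2s hz3s hz2.1 hz3.1 h hz2.2.2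

end Ray

lemma neighborSet_infinite (v : List ℕ) : (myG.neighborSet v).Infinite := by
  apply Set.infinite_of_injective_forall_mem (f := fun a : ℕ => a :: v)
  · intro a b h
    exact (List.cons.injEq a v b v ▸ h).1
  · intro a
    exact adj_cons a v

lemma ray_exists : ∃ r : ℕ → List ℕ, Paper.IsRay myG r := by
  refine ⟨fun n => List.replicate n 0, ?_, ?_⟩
  · intro a b h
    simpa using congrArg List.length h
  · intro n
    exact Or.inl ⟨0, List.replicate_succ⟩

/-- A walk inside an induced connected subgraph, viewed in `myG`. -/
lemma exists_walk {s : Set (List ℕ)} (hc : (myG.induce s).Connected)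
    {a b : List ℕ} (ha : a ∈ s) (hb : b ∈ s) :
    ∃ w : myG.Walk a b, ∀ x ∈ w.support, x ∈ s := by
  obtain ⟨q⟩ := hc ⟨a, ha⟩ ⟨b, hb⟩
  refine ⟨q.map (SimpleGraph.Embedding.induce s).toHom, ?_⟩
  intro x hx
  erw [SimpleGraph.Walk.support_map] at hx
  obtain ⟨z, _, rfl⟩ := List.mem_map.mp hx
  exact z.2

/-- Every finite connected set in `myG` has a root: a common suffix belonging
to the set. -/
lemma exists_root {s : Finset (List ℕ)} (hne : s.Nonempty)
    (hc : (myG.induce (s : Set (List ℕ))).Connected) :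
    ∃ m ∈ s, ∀ b ∈ s, m <:+ b := by
  obtain ⟨m, hm, hmin⟩ := s.exists_min_image List.length hne
  refine ⟨m, hm, fun b hb => ?_⟩
  by_contra hsuf
  obtain ⟨w, hw⟩ := exists_walk hc hb hm
  obtain ⟨z, hzs, hz1, hz2, _⟩ := walk_cross w hsuf (List.suffix_refl m)
  have hzmem : z ∈ s := hw z hzs
  have h1 := hmin z hzmem
  have h2 := strict_suffix_length hz1 hz2
  omega

/-- The witness graph has no complete minor of order `> 4` (in fact `> 3`). -/
lemma no_big_minor : ∀ k : ℕ, 4 < k → ¬ Paper.HasKMinor myG k := by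
  rintro k hk ⟨B, hBne, hBdisj, hBconn, hBadj⟩
  have hroots := fun i => exists_root (hBne i) (hBconn i)
  choose mf hmem hroot using hroots
  -- roots are pairwise comparable
  have hcomp : ∀ i j, i ≠ j → mf i <:+ mf j ∨ mf j <:+ mf i := by
    intro i j hij
    obtain ⟨x, hx, y, hy, hadj⟩ := hBadj i j hij
    rcases adj_cases hadj with ⟨h, _, _⟩ | ⟨h, _, _⟩
    · exact List.suffix_or_suffix_of_suffix ((hroot i x hx).trans h) (hroot j y hy)
    · exact List.suffix_or_suffix_of_suffix (hroot i x hx) ((hroot j y hy).trans h)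
  obtain ⟨i0, -, hmax⟩ := Finset.exists_max_image Finset.univ
    (fun i => (mf i).length) ⟨⟨0, by omega⟩, Finset.mem_univ _⟩
  have hdisjne : ∀ j, j ≠ i0 → mf j ≠ mf i0 := by
    intro j hj h
    exact Finset.disjoint_left.mp (hBdisj j i0 hj) (hmem j) (h ▸ hmem i0)
  have hstrict : ∀ j, j ≠ i0 → mf j <:+ mf i0 := by
    intro j hj
    rcases hcomp j i0 hj with h | h
    · exact h
    · exfalso
      exact hdisjne j hj (h.sublist.eq_of_length
        (le_antisymm (h.length_le) (hmax j (Finset.mem_univ j)))).symm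
  have hz : ∀ j, j ≠ i0 → ∃ z ∈ B j, z <:+ mf i0 ∧ z ≠ mf i0 ∧
      (mf i0).length ≤ z.length + 2 := by
    intro j hj
    obtain ⟨x, hx, y, hy, hadj⟩ := hBadj j i0 hj
    have hym : mf i0 <:+ y := hroot i0 y hy
    by_cases hxm : mf i0 <:+ x
    · obtain ⟨w, hw⟩ := exists_walk (hBconn j) (hmem j) hx
      have hnm : ¬ mf i0 <:+ mf j := by
        intro h
        exact hdisjne j hj ((hstrict j hj).sublist.eq_of_length
          (le_antisymm (hstrict j hj).length_le h.length_le))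
      obtain ⟨z, hzs, hzp⟩ := walk_cross w hnm hxm
      exact ⟨z, hw z hzs, hzp⟩
    · exact ⟨x, hx, adj_cross hadj hxm hym⟩
  choose! zf hzf1 hzf2 hzf3 hzf4 using hz
  -- pigeonhole on lengths
  have hmapsto : ∀ j ∈ Finset.univ.erase i0,
      (zf j).length ∈ ({(mf i0).length - 1, (mf i0).length - 2} : Finset ℕ) := by
    intro j hj
    have hj' := Finset.ne_of_mem_erase hj
    have h1 := strict_suffix_length (hzf2 j hj') (hzf3 j hj')
    have h2 := hzf4 j hj'
    simp only [Finset.mem_insert, Finset.mem_singleton]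
    omega
  have hcard : ({(mf i0).length - 1, (mf i0).length - 2} : Finset ℕ).card <
      (Finset.univ.erase i0).card := by
    have h1 : ({(mf i0).length - 1, (mf i0).length - 2} : Finset ℕ).card ≤ 2 := by
      apply le_trans (Finset.card_insert_le _ _)
      simp
    have h2 : (Finset.univ.erase i0).card = k - 1 := by
      rw [Finset.card_erase_of_mem (Finset.mem_univ i0)]
      simp
    omega
  obtain ⟨ja, hja, jb, hjb, hjab, hlen⟩ :=
    Finset.exists_ne_map_eq_of_card_lt_of_maps_to hcard hmapsto
  have hja' := Finset.ne_of_mem_erase hja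
  have hjb' := Finset.ne_of_mem_erase hjb
  have heq : zf ja = zf jb :=
    suffix_eq_of_length (hzf2 ja hja') (hzf2 jb hjb') hlen
  exact Finset.disjoint_left.mp (hBdisj ja jb hjab) (hzf1 ja hja')
    (heq ▸ hzf1 jb hjb')

/-- Any set with finite nonempty vertex-boundary in (an everything-containing
induced subgraph of) the witness graph has infinite edge-boundary. -/
lemma eBoundary_infinite {s : Set (List ℕ)} (hs : ∀ x, x ∈ s) (A : Set s)
    (hfin : (Paper.vBoundary (myG.induce s) A).Finite)
    (hne : (Paper.vBoundary (myG.induce s) A).Nonempty) :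
    (Paper.eBoundary (myG.induce s) A).Infinite := by
  obtain ⟨x, hxA, y, hyA, hxy⟩ := hne
  -- Step 1: produce a parent-child crossing pair
  have step1 : ∃ u w : s, u ∈ A ∧ w ∉ A ∧
      ((∃ a, (w : List ℕ) = a :: (u : List ℕ)) ∨
       (∃ a, (u : List ℕ) = a :: (w : List ℕ))) := by
    have hadj : myG.Adj (x : List ℕ) (y : List ℕ) := hxy
    rcases hadj with ⟨a, h⟩ | ⟨a, h⟩ | ⟨a, b, h⟩ | ⟨a, b, h⟩
    · exact ⟨x, y, hxA, hyA, Or.inl ⟨a, h⟩⟩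
    · exact ⟨x, y, hxA, hyA, Or.inr ⟨a, h⟩⟩
    · by_cases hc : (⟨b :: (x : List ℕ), hs _⟩ : s) ∈ A
      · exact ⟨⟨b :: (x : List ℕ), hs _⟩, y, hc, hyA, Or.inl ⟨a, by rw [h]⟩⟩
      · exact ⟨x, ⟨b :: (x : List ℕ), hs _⟩, hxA, hc, Or.inl ⟨b, rfl⟩⟩
    · by_cases hc : (⟨b :: (y : List ℕ), hs _⟩ : s) ∈ A
      · exact ⟨⟨b :: (y : List ℕ), hs _⟩, y, hc, hyA, Or.inr ⟨b, rfl⟩⟩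
      · exact ⟨x, ⟨b :: (y : List ℕ), hs _⟩, hxA, hc, Or.inr ⟨a, by rw [h]⟩⟩
  obtain ⟨u, w, huA, hwA, hcase⟩ := step1
  -- Step 2: in both cases, build the infinite family of common neighbours
  obtain ⟨φ, hφinj, hφu, hφw⟩ : ∃ φ : ℕ → s, Function.Injective φ ∧
      (∀ t, myG.Adj (φ t : List ℕ) (u : List ℕ)) ∧
      (∀ t, myG.Adj (φ t : List ℕ) (w : List ℕ)) := by
    rcases hcase with ⟨a, h⟩ | ⟨a, h⟩
    · refine ⟨fun t => ⟨t :: (w : List ℕ), hs _⟩, ?_, ?_, ?_⟩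
      · intro t t' ht
        have := congrArg (Subtype.val) ht
        exact (List.cons.injEq _ _ _ _ ▸ this).1
      · intro t
        refine Or.inr (Or.inr (Or.inr ⟨t, a, ?_⟩))
        simp [h]
      · intro t
        exact Or.inr (Or.inl ⟨t, rfl⟩)
    · refine ⟨fun t => ⟨t :: (u : List ℕ), hs _⟩, ?_, ?_, ?_⟩
      · intro t t' ht
        have := congrArg (Subtype.val) ht
        exact (List.cons.injEq _ _ _ _ ▸ this).1
      · intro t
        exact Or.inr (Or.inl ⟨t, rfl⟩)
      · intro t
        refine Or.inr (Or.inr (Or.inr ⟨t, a, ?_⟩))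
        simp [h]
  have hTfin : {t : ℕ | φ t ∈ A}.Finite := by
    apply Set.Finite.subset (Set.Finite.preimage hφinj.injOn hfin)
    intro t ht
    exact ⟨ht, w, hwA, hφw t⟩
  have hTinf : {t : ℕ | φ t ∉ A}.Infinite := by
    have : {t : ℕ | φ t ∉ A} = {t : ℕ | φ t ∈ A}ᶜ := by ext t; simp
    rw [this]
    exact hTfin.infinite_compl
  have himg : (fun t => s(u, φ t)) '' {t : ℕ | φ t ∉ A} ⊆
      Paper.eBoundary (myG.induce s) A := by
    rintro e ⟨t, ht, rfl⟩
    exact ⟨u, φ t, huA, ht, (hφu t).symm, rfl⟩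
  apply Set.Infinite.mono himg
  apply Set.Infinite.image _ hTinf
  intro t _ t' _ h
  exact hφinj (Sym2.congr_right.mp h)

/-- Every ray of the witness graph has infinite relative degree. -/
lemma relDegree_top (r : ℕ → List ℕ) (hr : Paper.IsRay myG r) :
    Paper.relDegree myG r = ⊤ := by
  have hdom : Paper.Dom myG r = ∅ := dom_empty hr
  have hmem : ∀ x : List ℕ, x ∈ (Paper.Dom myG r)ᶜ := by
    intro x
    rw [hdom]
    simp
  have hray' : Paper.IsRay (Paper.Gmin myG r) (fun n => ⟨r n, hmem _⟩) := by
    constructor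
    · intro a b h
      exact hr.inj (congrArg Subtype.val h)
    · intro n
      exact hr.adj n
  have hf : ∃ f, Paper.InDeletedEnd myG r f := by
    refine ⟨fun n => ⟨r n, hmem _⟩, hray', ?_⟩
    intro S hS
    obtain ⟨x, hx⟩ := ((Set.infinite_range_of_injective hr.inj).diff hS).nonempty
    obtain ⟨k, rfl⟩ := hx.1
    refine ⟨k, k, SimpleGraph.Walk.nil, ?_⟩
    intro z hzs
    rw [SimpleGraph.Walk.support_nil] at hzs
    rw [List.mem_singleton] at hzs
    rw [hzs]
    exact hx.2
  unfold Paper.relDegree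
  rw [if_neg]
  · have h0 : (((Paper.Dom myG r).encard : ℕ∞) : ℝ≥0∞) = 0 := by
      rw [hdom]
      simp
    rw [h0, zero_add, iInf_eq_top]
    rintro ⟨A, hA⟩
    show Filter.atTop.liminf (fun i => Paper.bratio (Paper.Gmin myG r) (A i)) = ⊤
    have hbr : ∀ i, Paper.bratio (Paper.Gmin myG r) (A i) = ⊤ := by
      intro i
      obtain ⟨hconn, hfinB, hray⟩ := hA.2.1 i
      obtain ⟨x, hx, -⟩ := Set.not_subset.mp (hA.2.2.2 i).1.1
      have hinf : (Paper.eBoundary (Paper.Gmin myG r) (A i)).Infinite :=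
        eBoundary_infinite hmem (A i) hfinB ⟨x, hx⟩
      have hvfin : (Paper.vBoundary (Paper.Gmin myG r) (A i)).encard ≠ ⊤ :=
        Set.encard_ne_top_iff.mpr hfinB
      unfold Paper.bratio
      rw [hinf.encard_eq, ENat.toENNReal_top, ENNReal.top_div, if_neg]
      intro hc
      rw [← ENat.toENNReal_top] at hc
      exact hvfin (ENat.toENNReal_strictMono.injective hc)
    rw [show (fun i => Paper.bratio (Paper.Gmin myG r) (A i)) = fun _ => (⊤ : ℝ≥0∞)
      from funext hbr]
    exact Filter.liminf_const ⊤
  · rintro (h | h)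
    · rw [hdom] at h
      exact h Set.finite_empty
    · exact h hf

end Witness
/-- there is no function `f : ℕ → ℕ` such that `δ^{V,Ω}(G) ≥ f k`
forces a `K_k` minor in every graph; witnessed by a graph in which every vertex
has infinite degree and every end has infinite relative degree (so
`δ^{V,Ω}(G) = ℵ₀`) but which has no complete minor of order greater than `4`. -/
theorem no_degree_function :
    (¬ ∃ f : ℕ → ℕ, ∀ (V : Type) (G : SimpleGraph V) (k : ℕ),
        (∀ v, (f k : ℕ∞) ≤ (G.neighborSet v).encard) →
        (∀ r : ℕ → V, IsRay G r → (f k : ℝ≥0∞) ≤ relDegree G r) →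
        HasKMinor G k) ∧
    ∃ (V : Type) (G : SimpleGraph V),
      (∀ v : V, (G.neighborSet v).Infinite) ∧
      (∃ r : ℕ → V, IsRay G r) ∧
      (∀ r : ℕ → V, IsRay G r → relDegree G r = ⊤) ∧
      ∀ k : ℕ, 4 < k → ¬ HasKMinor G k := by
  constructor
  · rintro ⟨f, hf⟩
    exact Witness.no_big_minor 5 (by omega)
      (hf (List ℕ) Witness.myG 5
        (fun v => by rw [(Witness.neighborSet_infinite v).encard_eq]; exact le_top)
        (fun r hr => by rw [Witness.relDegree_top r hr]; exact le_top))
  · exact ⟨List ℕ, Witness.myG, Witness.neighborSet_infinite, Witness.ray_exists,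
      Witness.relDegree_top, Witness.no_big_minor⟩

end Paper
end

section
/- For every k ∈ ℕ there is a locally finite one-ended graph whose unique end has relative degree exactly k: namely the graph obtained from countably many disjoint copies K₁, K₂, K₃, … of the complete graph K_k by adding all edges between K_i and K_{i+1} for each i. -/
open scoped ENNReal

namespace Paper

variable {V : Type*} {W : Type*}

/-! ### Auxiliary development -/

open SimpleGraph

/-- The graph: copies of `K_k` indexed by ℕ, consecutive copies completely joined. -/
def KG (k : ℕ) : SimpleGraph (ℕ × Fin k) where
  Adj p q := p ≠ q ∧ (p.1 = q.1 ∨ p.1 = q.1 + 1 ∨ q.1 = p.1 + 1)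
  symm := ⟨by intro p q h; exact ⟨Ne.symm h.1, by tauto⟩⟩
  loopless := ⟨by intro p h; exact h.1 rfl⟩

variable {k : ℕ}

lemma KG_adj {p q : ℕ × Fin k} :
    (KG k).Adj p q ↔ p ≠ q ∧ (p.1 = q.1 ∨ p.1 = q.1 + 1 ∨ q.1 = p.1 + 1) := Iff.rfl

lemma KG_adj_of_lvl {p q : ℕ × Fin k} (h : p.1 = q.1 + 1) : (KG k).Adj p q := by
  refine ⟨fun he => by subst he; omega, by tauto⟩

lemma KG_adj_up {a : ℕ} {i j : Fin k} : (KG k).Adj (a, i) (a + 1, j) :=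
  ((KG k).adj_symm (KG_adj_of_lvl (by simp)))

lemma KG_adj_same {a : ℕ} {i j : Fin k} (h : i ≠ j) : (KG k).Adj (a, i) (a, j) :=
  ⟨by simpa using h, Or.inl rfl⟩

lemma KG_adj_level {p q : ℕ × Fin k} (h : (KG k).Adj p q) :
    p.1 ≤ q.1 + 1 ∧ q.1 ≤ p.1 + 1 := by
  rcases h with ⟨-, h | h | h⟩ <;> omega

/-- Walk straight up a column. -/
def upWalk (j : Fin k) (a : ℕ) : (d : ℕ) → (KG k).Walk (a, j) (a + d, j)
  | 0 => SimpleGraph.Walk.nil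
  | d + 1 => (upWalk j a d).concat KG_adj_up

lemma upWalk_support {j : Fin k} {a d : ℕ} :
    ∀ x ∈ (upWalk j a d).support, a ≤ x.1 ∧ x.1 ≤ a + d ∧ x.2 = j := by
  induction d with
  | zero => intro x hx; simp [upWalk] at hx; subst hx; simp
  | succ d ih =>
    intro x hx
    rw [upWalk, SimpleGraph.Walk.support_concat] at hx
    rcases (by simpa using hx : x ∈ (upWalk j a d).support ∨ x = (a + (d + 1), j)) with h | h
    · have := ih x h; exact ⟨this.1, by omega, this.2.2⟩
    · subst h; exact ⟨by omega, by omega, rfl⟩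

/-- Walk within a column between arbitrary levels. -/
def colWalk (j : Fin k) (a b : ℕ) : (KG k).Walk (a, j) (b, j) :=
  if h : a ≤ b then (upWalk j a (b - a)).copy rfl (by congr 1; omega)
  else ((upWalk j b (a - b)).copy rfl (by congr 1; omega)).reverse

lemma colWalk_support {j : Fin k} {a b : ℕ} :
    ∀ x ∈ (colWalk j a b).support, min a b ≤ x.1 ∧ x.1 ≤ max a b ∧ x.2 = j := by
  intro x hx
  unfold colWalk at hx
  split_ifs at hx with h
  · rw [Walk.support_copy] at hx
    have := upWalk_support x hx; exact ⟨by omega, by omega, this.2.2⟩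
  · rw [Walk.support_reverse, List.mem_reverse, Walk.support_copy] at hx
    have := upWalk_support x hx; exact ⟨by omega, by omega, this.2.2⟩

/-- A walk between any two vertices of `KG k`. -/
def toWalk (p q : ℕ × Fin k) : (KG k).Walk p q :=
  if h : p.2 = q.2 then
    (colWalk p.2 p.1 q.1).copy rfl (by rw [h])
  else
    Walk.cons (by exact KG_adj_up (a := p.1) (i := p.2) (j := q.2))
      ((colWalk q.2 (p.1 + 1) q.1).copy rfl rfl)

lemma toWalk_support {p q : ℕ × Fin k} :
    ∀ x ∈ (toWalk p q).support,
      (min p.1 q.1 ≤ x.1 ∧ x.1 ≤ max (p.1 + 1) q.1) ∧ (x.2 = q.2 ∨ x = p) := by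
  intro x hx
  unfold toWalk at hx
  split_ifs at hx with h
  · rw [Walk.support_copy] at hx
    have := colWalk_support x hx
    exact ⟨⟨this.1, by omega⟩, Or.inl (this.2.2.trans h)⟩
  · rw [Walk.support_cons] at hx
    rcases List.mem_cons.mp hx with h' | h'
    · subst h'; exact ⟨⟨by omega, by omega⟩, Or.inr rfl⟩
    · rw [Walk.support_copy] at h'
      have := colWalk_support x h'
      exact ⟨⟨by omega, by omega⟩, Or.inl this.2.2⟩

section Generic

variable {α : Type*} {H : SimpleGraph α}

/-- Lift a walk into an induced subgraph. -/
def liftInduce {s : Set α} :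
    {x y : α} → (w : H.Walk x y) → (hs : ∀ z ∈ w.support, z ∈ s) →
      (H.induce s).Walk ⟨x, hs x (Walk.start_mem_support w)⟩ ⟨y, hs y (Walk.end_mem_support w)⟩
  | _, _, Walk.nil, _ => Walk.nil
  | _, _, Walk.cons h w, hs =>
      Walk.cons (by exact h) (liftInduce w (fun z hz => hs z (by simp [Walk.support_cons, hz])))

lemma liftInduce_support {s : Set α} {x y : α} (w : H.Walk x y)
    (hs : ∀ z ∈ w.support, z ∈ s) :
    ∀ z ∈ (liftInduce w hs).support, (z : α) ∈ w.support := by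
  induction w with
  | nil => intro z hz; simp [liftInduce] at hz ⊢; rw [hz]
  | cons h w ih =>
    intro z hz
    simp only [liftInduce, Walk.support_cons] at hz
    rcases List.mem_cons.mp hz with h' | h'
    · subst h'; simp [Walk.support_cons]
    · simp only [Walk.support_cons, List.mem_cons]
      exact Or.inr (ih _ z h')

/-- A segment of a "ray" as a walk. -/
def raySeg (f : ℕ → α) (hadj : ∀ n, H.Adj (f n) (f (n + 1))) (a : ℕ) :
    (d : ℕ) → H.Walk (f a) (f (a + d))
  | 0 => Walk.nil
  | d + 1 => (raySeg f hadj a d).concat (hadj (a + d))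

lemma raySeg_support {f : ℕ → α} {hadj : ∀ n, H.Adj (f n) (f (n + 1))} {a d : ℕ} :
    ∀ x ∈ (raySeg (H := H) f hadj a d).support, ∃ l, a ≤ l ∧ l ≤ a + d ∧ x = f l := by
  induction d with
  | zero => intro x hx; simp [raySeg] at hx; exact ⟨a, le_refl a, by omega, hx⟩
  | succ d ih =>
    intro x hx
    rw [raySeg, Walk.support_concat] at hx
    rcases (by simpa using hx : x ∈ (raySeg (H := H) f hadj a d).support ∨ x = f (a + (d + 1)))
      with h | h
    · obtain ⟨l, h1, h2, h3⟩ := ih x h; exact ⟨l, h1, by omega, h3⟩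
    · exact ⟨a + d + 1, by omega, by omega, h⟩

/-- Propagation: if `x ∈ A` and a walk from `x` to `y` avoids the vertex boundary of `A`
(except possibly at `y`), then `y ∈ A`. -/
lemma mem_of_walk_avoid {A : Set α} :
    ∀ {x y : α} (w : H.Walk x y), x ∈ A →
      (∀ z ∈ w.support, z = y ∨ z ∉ vBoundary H A) → y ∈ A := by
  intro x y w
  induction w with
  | nil => intro hx _; exact hx
  | @cons u b v h w ih =>
    intro hx hav
    rcases hav u (by simp [Walk.support_cons]) with h' | h'
    · subst h'; exact hx
    · have hb : b ∈ A := by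
        by_contra hb
        exact h' ⟨hx, b, hb, h⟩
      exact ih hb (fun z hz => hav z (by simp [Walk.support_cons, hz]))

/-- Level-crossing: a walk all of whose vertices avoid level `m` and which ends above
level `m` starts above level `m`. -/
lemma crossing (lvl : α → ℕ) (hlvl : ∀ a b, H.Adj a b → lvl b ≤ lvl a + 1) {m : ℕ} :
    ∀ {x y : α} (w : H.Walk x y), (∀ z ∈ w.support, lvl z ≠ m) → m < lvl y → m < lvl x := by
  intro x y w
  induction w with
  | nil => intro _ h; exact h
  | @cons u b v h w ih =>
    intro hav hy
    have hb : m < lvl b := ih (fun z hz => hav z (by simp [Walk.support_cons, hz])) hy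
    have h1 : lvl b ≤ lvl u + 1 := hlvl _ _ h
    have h2 : lvl u ≠ m := hav u (by simp [Walk.support_cons])
    omega

/-- An injective sequence eventually avoids any finite set. -/
lemma eventually_avoid {f : ℕ → α} (hf : Function.Injective f) {S : Set α} (hS : S.Finite) :
    ∃ N, ∀ m, N ≤ m → f m ∉ S := by
  have h1 : {m | f m ∈ S}.Finite := hS.preimage hf.injOn
  obtain ⟨N, hN⟩ := h1.bddAbove
  exact ⟨N + 1, fun m hm hmem => by have := hN hmem; omega⟩

end Generic

/-- Level sets of `ℕ × Fin k` are finite. -/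
lemma levels_finite (N : ℕ) : {p : ℕ × Fin k | p.1 ≤ N}.Finite := by
  have : {p : ℕ × Fin k | p.1 ≤ N} ⊆ (Set.Iic N) ×ˢ (Set.univ : Set (Fin k)) := by
    intro p hp; exact ⟨hp, trivial⟩
  exact Set.Finite.subset ((Set.finite_Iic N).prod Set.finite_univ) this

/-- An injective sequence in `ℕ × Fin k` reaches arbitrarily high levels, arbitrarily late. -/
lemma exists_high {f : ℕ → ℕ × Fin k} (hf : Function.Injective f) (N n₀ : ℕ) :
    ∃ m, n₀ ≤ m ∧ N ≤ (f m).1 := by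
  obtain ⟨M, hM⟩ := eventually_avoid hf (levels_finite (k := k) (N - 1))
  refine ⟨max n₀ M, le_max_left _ _, ?_⟩
  have := hM (max n₀ M) (le_max_right _ _)
  simp only [Set.mem_setOf_eq] at this
  omega



lemma KG_nbr_finite (v : ℕ × Fin k) : ((KG k).neighborSet v).Finite := by
  apply (levels_finite (v.1 + 1)).subset
  intro q hq
  exact (KG_adj_level hq).2

lemma not_dominates {r : ℕ → ℕ × Fin k} (hr : Function.Injective r) (v : ℕ × Fin k) :
    ¬ DominatesRay (KG k) v r := by
  rintro ⟨g, p, hg, hpath, hdisj⟩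
  have hnil : ∀ n, (p n).Nil → v = r (g n) := by
    intro n hn
    have h0 : (p n).length = 0 := Walk.nil_iff_length_eq.mp hn
    have h1 := (p n).getVert_length
    rw [h0] at h1
    rw [← h1, Walk.getVert_zero]
  have hTc : {n | (p n).Nil}.Subsingleton := by
    intro m hm n hn
    exact hg (hr (((hnil m hm).symm).trans (hnil n hn)))
  have hTinf : {n | ¬ (p n).Nil}.Infinite := by
    have h := hTc.finite.infinite_compl
    rwa [Set.compl_setOf] at h
  have hlen : ∀ n, ¬ (p n).Nil → 0 < (p n).length := by
    intro n hn
    exact Nat.pos_of_ne_zero (fun h => hn (Walk.nil_iff_length_eq.mpr h))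
  have hadj : ∀ n, ¬ (p n).Nil → (KG k).Adj v ((p n).getVert 1) := by
    intro n hn
    have := (p n).adj_getVert_succ (hlen n hn)
    rwa [Walk.getVert_zero] at this
  have hne : ∀ n, ¬ (p n).Nil → (p n).getVert 1 ≠ v := by
    intro n hn h
    have h2 := hadj n hn
    rw [h] at h2
    exact (KG k).irrefl h2
  have hinj : Set.InjOn (fun n => (p n).getVert 1) {n | ¬ (p n).Nil} := by
    intro m hm n hn hmn
    by_contra hne'
    have hmem : ∀ l ∈ {n | ¬ (p n).Nil}, (p l).getVert 1 ∈ (p l).support :=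
      fun l hl => Walk.mem_support_iff_exists_getVert.mpr ⟨1, rfl, hlen l hl⟩
    have hmn' : (p m).getVert 1 = (p n).getVert 1 := hmn
    have h2 : (p m).getVert 1 ∈ (p n).support := by rw [hmn']; exact hmem n hn
    exact hne m hm (hdisj m n hne' _ (hmem m hm) h2)
  have hfin : ((fun n => (p n).getVert 1) '' {n | ¬ (p n).Nil}).Finite := by
    apply (KG_nbr_finite v).subset
    rintro x ⟨n, hn, rfl⟩
    exact hadj n hn
  exact hTinf (Set.Finite.of_finite_image hfin hinj)

lemma dom_empty {r : ℕ → ℕ × Fin k} (hr : IsRay (KG k) r) : Dom (KG k) r = ∅ := by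
  ext v
  simp only [Dom, Set.mem_setOf_eq, Set.mem_empty_iff_false, iff_false]
  exact not_dominates hr.inj v

lemma rays_equiv (r s : ℕ → ℕ × Fin k) (hr : IsRay (KG k) r) (hs : IsRay (KG k) s) :
    EquivRay (KG k) r s := by
  intro S hS
  obtain ⟨N, hN⟩ : ∃ N, ∀ x ∈ S, x.1 < N := by
    obtain ⟨N, hN⟩ := (hS.image Prod.fst).bddAbove
    exact ⟨N + 1, fun x hx => by have := hN (Set.mem_image_of_mem _ hx); omega⟩
  obtain ⟨m, -, hm⟩ := exists_high hr.inj N 0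
  obtain ⟨n, -, hn⟩ := exists_high hs.inj N 0
  refine ⟨m, n, toWalk (r m) (s n), ?_⟩
  intro x hx hxS
  have h1 := (toWalk_support x hx).1.1
  have h2 := hN x hxS
  omega

section Sub

variable {D : Set (ℕ × Fin k)}

lemma IG_adj {a b : ↥D} : ((KG k).induce D).Adj a b ↔ (KG k).Adj a.1 b.1 := Iff.rfl

lemma IG_adj_level {a b : ↥D} (h : ((KG k).induce D).Adj a b) : b.1.1 ≤ a.1.1 + 1 :=
  (KG_adj_level (IG_adj.mp h)).2

/-- Lift a `KG`-walk to the induced graph on a full set `D`. -/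
def liftWalkD (hD : ∀ x, x ∈ D) (x y : ↥D) (w : (KG k).Walk x.1 y.1) :
    ((KG k).induce D).Walk x y :=
  (liftInduce w (fun z _ => hD z)).copy (Subtype.ext rfl) (Subtype.ext rfl)

lemma liftWalkD_support (hD : ∀ x, x ∈ D) (x y : ↥D) (w : (KG k).Walk x.1 y.1) :
    ∀ z ∈ (liftWalkD hD x y w).support, (z : ℕ × Fin k) ∈ w.support := by
  intro z hz
  rw [liftWalkD, Walk.support_copy] at hz
  exact liftInduce_support w _ z hz

lemma levels_finiteD (N : ℕ) : {x : ↥D | x.1.1 ≤ N}.Finite :=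
  (levels_finite N).preimage Subtype.val_injective.injOn

lemma exists_highD {f : ℕ → ↥D} (hf : Function.Injective f) (N n₀ : ℕ) :
    ∃ m, n₀ ≤ m ∧ N ≤ (f m).1.1 :=
  exists_high (Subtype.val_injective.comp hf) N n₀

end Sub


section Ratio

variable {D : Set (ℕ × Fin k)}

lemma encard_level (hD : ∀ x, x ∈ D) (m : ℕ) :
    ({x : ↥D | x.1.1 = m}).encard = (k : ℕ∞) := by
  have himg : {x : ↥D | x.1.1 = m} =
      (fun j : Fin k => (⟨(m, j), hD _⟩ : ↥D)) '' Set.univ := by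
    ext x
    simp only [Set.mem_setOf_eq, Set.image_univ, Set.mem_range]
    constructor
    · intro hx
      exact ⟨x.1.2, Subtype.ext (Prod.ext hx.symm rfl)⟩
    · rintro ⟨j, rfl⟩; rfl
  rw [himg]
  have hinj : Function.Injective (fun j : Fin k => (⟨(m, j), hD _⟩ : ↥D)) := by
    intro a b hab
    simpa [Subtype.ext_iff, Prod.ext_iff] using hab
  rw [hinj.encard_image, Set.encard_univ]
  simp

lemma bratio_eq (hk : 0 < k) (hD : ∀ x, x ∈ D) (A : Set ↥D) (m : ℕ) (hm : 1 ≤ m)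
    (hvB : vBoundary ((KG k).induce D) A = {x : ↥D | x.1.1 = m})
    (hdown : ∀ x : ↥D, x.1.1 = m - 1 → x ∉ A)
    (hup : ∀ x : ↥D, m ≤ x.1.1 → x ∈ A) :
    bratio ((KG k).induce D) A = (k : ℝ≥0∞) := by
  have heB : eBoundary ((KG k).induce D) A =
      (fun ij : Fin k × Fin k =>
        s((⟨(m, ij.1), hD _⟩ : ↥D), (⟨(m - 1, ij.2), hD _⟩ : ↥D))) '' Set.univ := by
    ext e
    simp only [eBoundary, Set.mem_setOf_eq, Set.image_univ, Set.mem_range]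
    constructor
    · rintro ⟨x, y, hxA, hyA, hadj, rfl⟩
      have hxB : x ∈ vBoundary ((KG k).induce D) A := ⟨hxA, y, hyA, hadj⟩
      rw [hvB] at hxB
      have hxm : x.1.1 = m := hxB
      have hy1 : y.1.1 ≤ m := by
        by_contra hy1
        exact hyA (hup y (by omega))
      have hy2 : x.1.1 ≤ y.1.1 + 1 := (KG_adj_level (IG_adj.mp hadj)).1
      have hym : y.1.1 = m - 1 := by
        by_contra hym
        exact hyA (hup y (by omega))
      have hx' : (⟨(m, x.1.2), hD _⟩ : ↥D) = x := Subtype.ext (Prod.ext hxm.symm rfl)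
      have hy' : (⟨(m - 1, y.1.2), hD _⟩ : ↥D) = y := Subtype.ext (Prod.ext hym.symm rfl)
      exact ⟨(x.1.2, y.1.2), by rw [hx', hy']⟩
    · rintro ⟨⟨i, j⟩, rfl⟩
      refine ⟨_, _, hup _ (by simp), hdown _ (by simp), ?_, rfl⟩
      exact IG_adj.mpr (KG_adj_of_lvl (show (m : ℕ) = m - 1 + 1 by omega))
  have heBc : (eBoundary ((KG k).induce D) A).encard = ((k * k : ℕ) : ℕ∞) := by
    rw [heB]
    have hinj : Function.Injective (fun ij : Fin k × Fin k =>
        s((⟨(m, ij.1), hD _⟩ : ↥D), (⟨(m - 1, ij.2), hD _⟩ : ↥D))) := by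
      rintro ⟨i, j⟩ ⟨i', j'⟩ hab
      rcases Sym2.eq_iff.mp hab with ⟨h1, h2⟩ | ⟨h1, h2⟩
      · have hi : i = i' := congrArg (fun z : ↥D => z.1.2) h1
        have hj : j = j' := congrArg (fun z : ↥D => z.1.2) h2
        simp [hi, hj]
      · exfalso
        have h3 : m = m - 1 := congrArg (fun z : ↥D => z.1.1) h1
        omega
    rw [hinj.encard_image, Set.encard_univ]
    simp
  have hvBc : (vBoundary ((KG k).induce D) A).encard = (k : ℕ∞) := by
    rw [hvB]; exact encard_level hD m
  rw [bratio, heBc, hvBc]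
  rw [ENat.toENNReal_coe, ENat.toENNReal_coe]
  push_cast
  rw [mul_div_assoc, ENNReal.div_self (by exact_mod_cast hk.ne') (ENNReal.natCast_ne_top k),
    mul_one]

end Ratio


section Structure

variable {D : Set (ℕ × Fin k)}

/-- The key structural lemma: if `A'` is a region containing a ray whose vertex boundary
is finite, nonempty-away-from `V'` and an inclusion-minimal `V'`–`Ω(A')` separator, with
`V'` disjoint from `A'`, then the vertex boundary of `A'` is exactly one level, the level
below it is outside `A'`, and everything from that level up is inside `A'`. -/
lemma boundary_structure (hD : ∀ x, x ∈ D)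
    (A' V' : Set ↥D)
    (f₀ : ℕ → ↥D) (hf₀ : IsRay ((KG k).induce D) f₀) (hf₀A : Set.range f₀ ⊆ A')
    (hSfin : (vBoundary ((KG k).induce D) A').Finite)
    (hV'A' : ∀ v ∈ V', v ∉ A')
    (hmin : MinSepVertsEndsIn ((KG k).induce D) V' (vBoundary ((KG k).induce D) A') A') :
    ∃ m : ℕ, 1 ≤ m ∧ vBoundary ((KG k).induce D) A' = {x : ↥D | x.1.1 = m} ∧
      (∀ x : ↥D, x.1.1 = m - 1 → x ∉ A') ∧ (∀ x : ↥D, m ≤ x.1.1 → x ∈ A') := by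
  set S : Set ↥D := vBoundary ((KG k).induce D) A' with hSdef
  obtain ⟨v₀, hv₀V, hv₀S⟩ := Set.not_subset.mp hmin.1.1
  -- S is nonempty
  have hSne : S.Nonempty := by
    rcases Set.eq_empty_or_nonempty S with hS0 | h
    · exfalso
      have hall : ∀ y : ↥D, y ∈ A' := by
        intro y
        have hx0 : f₀ 0 ∈ A' := hf₀A ⟨0, rfl⟩
        exact mem_of_walk_avoid (liftWalkD hD (f₀ 0) y (toWalk (f₀ 0).1 y.1)) hx0
          (fun z _ => Or.inr (by rw [← hSdef, hS0]; exact Set.notMem_empty z))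
      exact hV'A' v₀ hv₀V (hall v₀)
    · exact h
  -- the maximal level of S
  obtain ⟨s₀, hs₀S, hmax⟩ := Set.Finite.exists_maximalFor (fun x : ↥D => x.1.1) S hSfin hSne
  have hSle : ∀ x ∈ S, x.1.1 ≤ s₀.1.1 := by
    intro x hx
    by_contra hgt
    have : x.1.1 ≤ s₀.1.1 := hmax hx (show s₀.1.1 ≤ x.1.1 by omega)
    omega
  -- everything above the maximal level of S is in A'
  obtain ⟨n₁, -, hn₁⟩ := exists_highD hf₀.inj (s₀.1.1 + 1) 0
  have hx₀ : f₀ n₁ ∈ A' := hf₀A ⟨n₁, rfl⟩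
  have hstep1 : ∀ y : ↥D, s₀.1.1 + 1 ≤ y.1.1 → y ∈ A' := by
    intro y hy
    apply mem_of_walk_avoid (liftWalkD hD (f₀ n₁) y (toWalk (f₀ n₁).1 y.1)) hx₀
    intro z hz
    right
    intro hzS
    have h1 := hSle z hzS
    have h2 := (toWalk_support _ (liftWalkD_support hD _ _ _ z hz)).1.1
    omega
  have hFactA : ∀ y : ↥D, s₀.1.1 ≤ y.1.1 → y ∈ A' := by
    intro y hy
    rcases eq_or_lt_of_le hy with heq | hlt
    · have hy' : (⟨(s₀.1.1 + 1, y.1.2), hD _⟩ : ↥D) ∈ A' := hstep1 _ (by simp)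
      have hadj : ((KG k).induce D).Adj ⟨(s₀.1.1 + 1, y.1.2), hD _⟩ y :=
        IG_adj.mpr (KG_adj_of_lvl (show s₀.1.1 + 1 = y.1.1 + 1 by omega))
      apply mem_of_walk_avoid (Walk.cons hadj Walk.nil) hy'
      intro z hz
      simp only [Walk.support_cons, Walk.support_nil, List.mem_cons, List.mem_singleton,
        List.not_mem_nil, or_false] at hz
      rcases hz with rfl | rfl
      · right
        intro hzS
        have := hSle _ hzS
        simp at this
      · exact Or.inl rfl
    · exact hstep1 y hlt
  -- s₀ has an outside neighbour, which must be one level down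
  obtain ⟨hs₀A, y, hyA, hy_adj⟩ := hs₀S
  have hy_lvl := KG_adj_level (IG_adj.mp hy_adj)
  have hylt : y.1.1 < s₀.1.1 := by
    by_contra hge
    exact hyA (hFactA y (by omega))
  have hm1 : 1 ≤ s₀.1.1 := by omega
  have hym : y.1.1 = s₀.1.1 - 1 := by omega
  -- the whole level of s₀ is contained in S
  have hlev_sub : ∀ x : ↥D, x.1.1 = s₀.1.1 → x ∈ S := by
    intro x hx
    exact ⟨hFactA x (le_of_eq hx.symm), y, hyA,
      IG_adj.mpr (KG_adj_of_lvl (show x.1.1 = y.1.1 + 1 by omega))⟩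
  -- S is contained in the level of s₀  (uses minimality of the separator)
  have hSlev : ∀ x ∈ S, x.1.1 = s₀.1.1 := by
    intro w hwS
    by_contra hwm
    have hS' : S \ {w} ⊂ S := Set.sdiff_singleton_ssubset.mpr hwS
    have hnot := hmin.2 (S \ {w}) hS'
    rw [SepVertsEndsIn] at hnot
    push_neg at hnot
    by_cases hVS : V' ⊆ S \ {w}
    · exact hmin.1.1 (hVS.trans Set.diff_subset)
    · obtain ⟨v, hvV, f, hfray, hfrange, n, htail, hreach⟩ := hnot hVS
      have hlevS' : ∀ x : ↥D, x.1.1 = s₀.1.1 → x ∈ S \ {w} := by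
        intro x hx
        exact ⟨hlev_sub x hx, fun h => hwm (by rw [← Set.mem_singleton_iff.mp h]; exact hx)⟩
      have hlvl : ∀ a b : ↥D, ((KG k).induce D).Adj a b → b.1.1 ≤ a.1.1 + 1 :=
        fun a b h => IG_adj_level h
      -- the tail of f avoids the level of s₀
      have htail' : ∀ m, n ≤ m → (f m).1.1 ≠ s₀.1.1 :=
        fun m hm hx => htail m hm (hlevS' _ hx)
      -- f n is above the level of s₀
      obtain ⟨n', hn'n, hn'h⟩ := exists_highD hfray.inj (s₀.1.1 + 1) n
      have hcast : n + (n' - n) = n' := by omega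
      have hfn : s₀.1.1 < (f n).1.1 := by
        apply crossing (fun x : ↥D => x.1.1) hlvl (raySeg f hfray.adj n (n' - n))
        · intro z hz
          obtain ⟨l, hl1, hl2, rfl⟩ := raySeg_support z hz
          exact htail' l hl1
        · rw [hcast]; omega
      -- hence v is above the level of s₀, contradiction
      obtain ⟨W, hW⟩ := hreach
      have hv : s₀.1.1 < v.1.1 := by
        apply crossing (fun x : ↥D => x.1.1) hlvl W _ hfn
        intro z hz hzl
        exact hW z hz (hlevS' z hzl)
      exact hV'A' v hvV (hFactA v (by omega))
  -- level below is outside A'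
  have hdown : ∀ x : ↥D, x.1.1 = s₀.1.1 - 1 → x ∉ A' := by
    intro x hx hxA
    by_cases hxy : x = y
    · rw [hxy] at hxA; exact hyA hxA
    · have hadj : ((KG k).induce D).Adj x y := by
        refine IG_adj.mpr ⟨?_, Or.inl (by omega)⟩
        exact fun h => hxy (Subtype.ext h)
      have hxS : x ∈ S := ⟨hxA, y, hyA, hadj⟩
      have := hSlev x hxS
      omega
  refine ⟨s₀.1.1, hm1, ?_, hdown, hFactA⟩
  ext x
  exact ⟨fun h => hSlev x h, fun h => hlev_sub x h⟩

end Structure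


lemma isRay_col (c : Fin k) (o : ℕ) : IsRay (KG k) (fun n => ((n + o, c) : ℕ × Fin k)) := by
  constructor
  · intro a b h
    simpa using congrArg Prod.fst h
  · intro n
    have h : n + 1 + o = n + o + 1 := by omega
    simp only [h]
    exact KG_adj_up

section Upper

variable {D : Set (ℕ × Fin k)}

lemma isRay_colD (hD : ∀ x, x ∈ D) (c : Fin k) (o : ℕ) :
    IsRay ((KG k).induce D) (fun n => (⟨(n + o, c), hD _⟩ : ↥D)) := by
  constructor
  · intro a b h
    simpa using congrArg (fun z : ↥D => z.1.1) h
  · intro n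
    apply IG_adj.mpr
    show (KG k).Adj (n + o, c) (n + 1 + o, c)
    have h : n + 1 + o = n + o + 1 := by omega
    simp only [h]
    exact KG_adj_up

/-- The upper-bound sequence of regions: everything at level `≥ i + 1`. -/
def Bs (D : Set (ℕ × Fin k)) (i : ℕ) : Set ↥D := {x | i + 1 ≤ x.1.1}

lemma vB_Bs (hD : ∀ x, x ∈ D) (i : ℕ) :
    vBoundary ((KG k).induce D) (Bs D i) = {x : ↥D | x.1.1 = i + 1} := by
  ext x
  constructor
  · rintro ⟨hxB, y, hyB, hadj⟩
    have h1 : i + 1 ≤ x.1.1 := hxB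
    have h2 : ¬ (i + 1 ≤ y.1.1) := hyB
    have h3 := (KG_adj_level (IG_adj.mp hadj)).1
    simp only [Set.mem_setOf_eq]
    omega
  · intro hx
    refine ⟨le_of_eq hx.symm, ⟨(i, x.1.2), hD _⟩, ?_, ?_⟩
    · simp [Bs]
    · exact IG_adj.mpr (KG_adj_of_lvl hx)

lemma conn_Bs (hk : 0 < k) (hD : ∀ x, x ∈ D) (i : ℕ) :
    (((KG k).induce D).induce (Bs D i)).Connected := by
  rw [connected_iff]
  constructor
  · intro a b
    have hs : ∀ z ∈ (liftWalkD hD a.1 b.1 (toWalk a.1.1 b.1.1)).support, z ∈ Bs D i := by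
      intro z hz
      have h2 := (toWalk_support _ (liftWalkD_support hD _ _ _ z hz)).1.1
      have ha : i + 1 ≤ a.1.1.1 := a.2
      have hb : i + 1 ≤ b.1.1.1 := b.2
      show i + 1 ≤ z.1.1
      omega
    exact ⟨(liftInduce _ hs).copy (Subtype.ext rfl) (Subtype.ext rfl)⟩
  · exact ⟨⟨⟨(i + 1, ⟨0, hk⟩), hD _⟩, by simp [Bs]⟩⟩

end Upper

/-- The sequence `Bs` converges to the (unique) end. -/
lemma converges_Bs {r : ℕ → ℕ × Fin k} (hk : 0 < k) (hr : IsRay (KG k) r) :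
    Converges (KG k) r (Bs ((Dom (KG k) r)ᶜ)) := by
  have hD : ∀ x, x ∈ ((Dom (KG k) r)ᶜ : Set (ℕ × Fin k)) := by
    intro x; simp [dom_empty hr]
  have hInDel : ∀ (c : Fin k) (o : ℕ),
      InDeletedEnd (KG k) r (fun n => (⟨(n + o, c), hD _⟩ : ↥((Dom (KG k) r)ᶜ))) := by
    intro c o
    exact ⟨isRay_colD hD c o, rays_equiv _ r (isRay_col c o) hr⟩
  refine ⟨?_, ?_, ?_, ?_⟩
  · -- injective
    intro a b hab
    have h1 : (⟨(a + 1, ⟨0, hk⟩), hD _⟩ : ↥((Dom (KG k) r)ᶜ)) ∈ Bs _ b := by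
      rw [← hab]; exact le_refl (a + 1)
    have h2 : (⟨(b + 1, ⟨0, hk⟩), hD _⟩ : ↥((Dom (KG k) r)ᶜ)) ∈ Bs _ a := by
      rw [hab]; exact le_refl (b + 1)
    have h1' : b + 1 ≤ a + 1 := h1
    have h2' : a + 1 ≤ b + 1 := h2
    omega
  · -- regions
    intro i
    refine ⟨conn_Bs hk hD i, ?_, ?_⟩
    · show (vBoundary ((KG k).induce _) (Bs _ i)).Finite
      rw [vB_Bs hD i]
      exact (levels_finiteD (i + 1)).subset (fun x hx => le_of_eq hx)
    · refine ⟨fun n => ⟨(n + (i + 1), ⟨0, hk⟩), hD _⟩, hInDel _ _, ?_⟩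
      rintro x ⟨n, rfl⟩
      show i + 1 ≤ n + (i + 1)
      omega
  · -- nested
    intro i x hx
    have hx' : i + 2 ≤ x.1.1 := hx
    constructor
    · show i + 1 ≤ x.1.1; omega
    · show x ∉ vBoundary ((KG k).induce _) (Bs _ i)
      rw [vB_Bs hD i]
      show ¬ x.1.1 = i + 1
      omega
  · -- minimal separators
    intro i
    show MinSepVertsEndsIn ((KG k).induce ((Dom (KG k) r)ᶜ))
      (vBoundary ((KG k).induce ((Dom (KG k) r)ᶜ)) (Bs _ i))
      (vBoundary ((KG k).induce ((Dom (KG k) r)ᶜ)) (Bs _ (i + 1))) (Bs _ (i + 1))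
    rw [vB_Bs hD i, vB_Bs hD (i + 1)]
    constructor
    · constructor
      · -- level i+1 not contained in level i+2
        rw [Set.not_subset]
        refine ⟨⟨(i + 1, ⟨0, hk⟩), hD _⟩, rfl, ?_⟩
        show ¬ (i + 1 : ℕ) = i + 2
        omega
      · intro v hv f hfray hfrange n htail hreach
        obtain ⟨W, hW⟩ := hreach
        have hfn : (i + 2 : ℕ) < (f n).1.1 := by
          have h1 : i + 2 ≤ (f n).1.1 := hfrange ⟨n, rfl⟩
          have h2 : (f n) ∉ {x : ↥((Dom (KG k) r)ᶜ) | x.1.1 = i + 2} := htail n le_rfl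
          have h3 : ¬ (f n).1.1 = i + 2 := h2
          omega
        have hv2 : (i + 2 : ℕ) < v.1.1 := by
          apply crossing (fun x : ↥((Dom (KG k) r)ᶜ) => x.1.1)
            (fun a b h => IG_adj_level h) W _ hfn
          intro z hz hzl
          exact hW z hz hzl
        have hv1 : v.1.1 = i + 1 := hv
        omega
    · -- minimality
      intro S' hS' hsep
      obtain ⟨w, hw2, hwS'⟩ := Set.exists_of_ssubset hS'
      have hw2' : w.1.1 = i + 2 := hw2
      have hfray := isRay_colD hD w.1.2 (i + 2)
      have hadj0 : ((KG k).induce ((Dom (KG k) r)ᶜ)).Adj ⟨(i + 1, w.1.2), hD _⟩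
          ⟨(0 + (i + 2), w.1.2), hD _⟩ := by
        apply IG_adj.mpr
        exact ((KG k).adj_symm (KG_adj_of_lvl (show 0 + (i + 2) = (i + 1) + 1 by omega)))
      refine hsep.2 ⟨(i + 1, w.1.2), hD _⟩ rfl _ hfray ?_ 0 ?_ ?_
      · rintro x ⟨n, rfl⟩
        show i + 2 ≤ n + (i + 2)
        omega
      · intro m hm
        intro hmem
        have hsub : S' ⊆ {x : ↥((Dom (KG k) r)ᶜ) | x.1.1 = i + 2} := hS'.subset
        by_cases hm0 : m = 0
        · subst hm0
          apply hwS'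
          have hfw : (⟨(0 + (i + 2), w.1.2), hD _⟩ : ↥((Dom (KG k) r)ᶜ)) = w := by
            apply Subtype.ext
            have h5 : (0 + (i + 2) : ℕ) = w.1.1 := by omega
            rw [h5]
          rwa [hfw] at hmem
        · have := hsub hmem
          have h4 : m + (i + 2) = i + 2 := this
          omega
      · refine ⟨Walk.cons hadj0 Walk.nil, ?_⟩
        intro z hz
        simp only [Walk.support_cons, Walk.support_nil, List.mem_cons, List.mem_singleton,
          List.not_mem_nil, or_false] at hz
        have hsub : S' ⊆ {x : ↥((Dom (KG k) r)ᶜ) | x.1.1 = i + 2} := hS'.subset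
        rcases hz with rfl | rfl
        · intro hmem
          have h4 : (i + 1 : ℕ) = i + 2 := hsub hmem
          omega
        · intro hmem
          apply hwS'
          have hfw : (⟨(0 + (i + 2), w.1.2), hD _⟩ : ↥((Dom (KG k) r)ᶜ)) = w := by
            apply Subtype.ext
            have h5 : (0 + (i + 2) : ℕ) = w.1.1 := by omega
            rw [h5]
          rwa [hfw] at hmem

/-- for every `k ≥ 1` the locally finite one-ended graph obtained
from countably many copies of `K_k` by joining consecutive copies completely
has a unique end, whose relative degree is exactly `k`. -/
theorem relDegree_eq_k (k : ℕ) (hk : 0 < k) :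
    ∃ G : SimpleGraph (ℕ × Fin k),
      (∀ p q : ℕ × Fin k, G.Adj p q ↔
          p ≠ q ∧ (p.1 = q.1 ∨ p.1 = q.1 + 1 ∨ q.1 = p.1 + 1)) ∧
      (∀ v, (G.neighborSet v).Finite) ∧
      (∃ r : ℕ → ℕ × Fin k, IsRay G r) ∧
      (∀ r s : ℕ → ℕ × Fin k, IsRay G r → IsRay G s → EquivRay G r s) ∧
      ∀ r : ℕ → ℕ × Fin k, IsRay G r → relDegree G r = (k : ℝ≥0∞) := by
  classical
  refine ⟨KG k, fun p q => Iff.rfl, KG_nbr_finite, ?_, rays_equiv, ?_⟩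
  · exact ⟨fun n => (n + 0, ⟨0, hk⟩), isRay_col ⟨0, hk⟩ 0⟩
  intro r hr
  have hDom := dom_empty hr
  have hD : ∀ x, x ∈ ((Dom (KG k) r)ᶜ : Set (ℕ × Fin k)) := fun x => by simp [hDom]
  have hInf : ¬ ((Dom (KG k) r).Infinite ∨ ¬ ∃ f, InDeletedEnd (KG k) r f) := by
    rw [not_or, not_not]
    constructor
    · rw [hDom]; exact Set.not_infinite.mpr Set.finite_empty
    · exact ⟨fun n => ⟨(n + 0, ⟨0, hk⟩), hD _⟩,
        isRay_colD hD ⟨0, hk⟩ 0, rays_equiv _ r (isRay_col ⟨0, hk⟩ 0) hr⟩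
  rw [relDegree, if_neg hInf]
  have he : ((Dom (KG k) r).encard : ℝ≥0∞) = 0 := by rw [hDom]; simp
  rw [he, zero_add]
  have hval : ∀ (A : ℕ → Set ((Dom (KG k) r)ᶜ : Set (ℕ × Fin k))), Converges (KG k) r A →
      (Filter.atTop.liminf fun i => bratio (Gmin (KG k) r) (A i)) = (k : ℝ≥0∞) := by
    intro A hA
    have hterm : ∀ i : ℕ, 1 ≤ i → bratio (Gmin (KG k) r) (A i) = (k : ℝ≥0∞) := by
      intro i hi
      obtain ⟨j, rfl⟩ : ∃ j, i = j + 1 := ⟨i - 1, by omega⟩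
      obtain ⟨hconn, hfin, f, hInDel, hrange⟩ := hA.2.1 (j + 1)
      have hV'A' : ∀ v ∈ vBoundary (Gmin (KG k) r) (A j), v ∉ A (j + 1) := by
        intro v hv hvA
        exact ((hA.2.2.1 j) hvA).2 hv
      obtain ⟨m, hm1, hvB, hdown, hup⟩ := boundary_structure hD (A (j + 1))
        (vBoundary ((KG k).induce ((Dom (KG k) r)ᶜ)) (A j)) f hInDel.1 hrange hfin hV'A'
        (hA.2.2.2 j)
      exact bratio_eq hk hD (A (j + 1)) m hm1 hvB hdown hup
    have hev : ∀ᶠ i in Filter.atTop, bratio (Gmin (KG k) r) (A i) = (k : ℝ≥0∞) :=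
      Filter.eventually_atTop.mpr ⟨1, hterm⟩
    rw [Filter.liminf_congr hev, Filter.liminf_const]
  haveI : Nonempty {A // Converges (KG k) r A} := ⟨⟨Bs _, converges_Bs hk hr⟩⟩
  rw [iInf_congr (fun A : {A // Converges (KG k) r A} => hval A.1 A.2), iInf_const]

end Paper
end

section
/- Let G be a graph, let (H_i) be a sequence of distinct regions with H_{i+1} ⊆ H_i − ∂_v H_i each containing a ray of a fixed end ω (no minimality requirement on the boundaries). Then there exists another such sequence (H'_j), each H'_j obtained by deleting finitely many vertices from some H_{i_j}, with liminf_j |∂_e H'_j|/|∂_v H'_j| = 1. Hence without the minimal-separator requirement in the definition, the relative degree of every end (with such a sequence and vertices of finite degree available on the boundaries) would be at most 1. -/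
open scoped ENNReal

namespace Paper

variable {V : Type*} {W : Type*}

section AuxNoMin

private def idxF (e : ℕ → ℕ) : ℕ → ℕ
  | 0 => 0
  | j + 1 => idxF e j + 3 * ((j + 1) * e (idxF e j)) + 3

private lemma idxF_succ (e : ℕ → ℕ) (j : ℕ) :
    idxF e (j + 1) = idxF e j + 3 * ((j + 1) * e (idxF e j)) + 3 := rfl

private lemma eB_subset' (G : SimpleGraph V) (S : Set V) :
    eBoundary G S ⊆ ⋃ x ∈ vBoundary G S, (fun y => s(x, y)) '' G.neighborSet x := by
  rintro e ⟨x, y, hx, hy, hadj, rfl⟩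
  exact Set.mem_biUnion ⟨hx, y, hy, hadj⟩ ⟨y, hadj, rfl⟩

private lemma eB_finite' (G : SimpleGraph V) (hlf : ∀ v, (G.neighborSet v).Finite) (S : Set V)
    (h : (vBoundary G S).Finite) : (eBoundary G S).Finite :=
  (h.biUnion fun x _ => (hlf x).image _).subset (eB_subset' G S)

private lemma vB_ncard_le_eB' (G : SimpleGraph V) (S : Set V)
    (hfin : (eBoundary G S).Finite) :
    (vBoundary G S).ncard ≤ (eBoundary G S).ncard := by
  classical
  have h : ∀ x : V, x ∈ vBoundary G S → ∃ y, y ∉ S ∧ G.Adj x y := fun x hx => hx.2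
  choose! f hf1 hf2 using h
  refine Set.ncard_le_ncard_of_injOn (fun x => s(x, f x)) ?_ ?_ hfin
  · exact fun x hx => ⟨x, f x, hx.1, hf1 x hx, hf2 x hx, rfl⟩
  · intro x hx x' hx' hxy
    rw [Sym2.eq_iff] at hxy
    rcases hxy with ⟨h1, _⟩ | ⟨h1, h2⟩
    · exact h1
    · exact absurd (h1 ▸ hx.1) (hf1 x' hx')

private lemma nat_one_le_div' {a b : ℕ} (hb : b ≠ 0) (h : b ≤ a) :
    1 ≤ (a : ℝ≥0∞) / (b : ℝ≥0∞) := by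
  rw [ENNReal.le_div_iff_mul_le (Or.inl (by exact_mod_cast hb))
    (Or.inl (ENNReal.natCast_ne_top b)), one_mul]
  exact_mod_cast h

private lemma nat_div_le_one_add_inv' {a b j : ℕ} (hb : b ≠ 0) (h : a * j ≤ b * (j + 1)) :
    (a : ℝ≥0∞) / (b : ℝ≥0∞) ≤ 1 + (j : ℝ≥0∞)⁻¹ := by
  rcases Nat.eq_zero_or_pos j with rfl | hj
  · simp
  have hj0 : (j : ℝ≥0∞) ≠ 0 := by exact_mod_cast hj.ne'
  have hjt : (j : ℝ≥0∞) ≠ ⊤ := ENNReal.natCast_ne_top j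
  have hb0 : (b : ℝ≥0∞) ≠ 0 := by exact_mod_cast hb
  have hbt : (b : ℝ≥0∞) ≠ ⊤ := ENNReal.natCast_ne_top b
  rw [ENNReal.div_le_iff hb0 hbt, ← ENNReal.mul_le_mul_iff_left hj0 hjt]
  have key : ((1 : ℝ≥0∞) + (j : ℝ≥0∞)⁻¹) * (b : ℝ≥0∞) * (j : ℝ≥0∞)
      = ((j : ℝ≥0∞) + 1) * (b : ℝ≥0∞) := by
    rw [mul_right_comm, add_mul, one_mul, ENNReal.inv_mul_cancel hj0 hjt]
  rw [key]
  calc ((a : ℝ≥0∞) * (j : ℝ≥0∞)) = ((a * j : ℕ) : ℝ≥0∞) := by push_cast; ring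
    _ ≤ ((b * (j + 1) : ℕ) : ℝ≥0∞) := by exact_mod_cast h
    _ = ((j : ℝ≥0∞) + 1) * (b : ℝ≥0∞) := by push_cast; ring

end AuxNoMin

/-- in a locally finite graph, given a sequence of distinct nested
regions containing rays of the end of `r` (with no minimality requirement on
the boundaries), one can delete finitely many vertices from suitable members of
the sequence to obtain another such sequence whose boundary ratios have liminf
exactly `1`. -/
theorem no_minimality_ratio_one (G : SimpleGraph V)
    (hlf : ∀ v, (G.neighborSet v).Finite) (r : ℕ → V) (hr : IsRay G r)
    (A : ℕ → Set V) (hinj : Function.Injective A)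
    (hreg : ∀ i, (vBoundary G (A i)).Finite ∧ (vBoundary G (A i)).Nonempty ∧
        ∃ f, IsRay G f ∧ Set.range f ⊆ A i ∧ EquivRay G f r)
    (hnest : ∀ i, A (i + 1) ⊆ A i \ vBoundary G (A i)) :
    ∃ A' : ℕ → Set V,
      Function.Injective A' ∧
      (∀ j, (vBoundary G (A' j)).Finite ∧
          ∃ f, IsRay G f ∧ Set.range f ⊆ A' j ∧ EquivRay G f r) ∧
      (∀ j, A' (j + 1) ⊆ A' j \ vBoundary G (A' j)) ∧
      (∀ j, ∃ i, ∃ F : Set V, F.Finite ∧ A' j = A i \ F) ∧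
      Filter.atTop.liminf (fun j => bratio G (A' j)) = 1 := by
  classical
  -- basic consequences of nestedness
  have hsub : ∀ {m n : ℕ}, m ≤ n → A n ⊆ A m := by
    intro m n h
    induction h with
    | refl => exact subset_rfl
    | step h ih => exact fun x hx => ih ((hnest _ hx).1)
  have hAdjIn : ∀ m, ∀ v ∈ A (m + 1), ∀ y, G.Adj v y → y ∈ A m := by
    intro m v hv y hadj
    have h1 := hnest m hv
    by_contra hy
    exact h1.2 ⟨h1.1, y, hy, hadj⟩
  have hDisjB : ∀ m n, m < n → ∀ x ∈ A n, x ∉ vBoundary G (A m) := by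
    intro m n hmn x hx
    exact (hnest m (hsub hmn hx)).2
  -- a choice of boundary vertices
  choose bb hbb using fun i => (hreg i).2.1
  have hbbA : ∀ m, bb m ∈ A m := fun m => (hbb m).1
  have hbbNot : ∀ m, bb m ∉ A (m + 1) :=
    fun m h => hDisjB m (m + 1) (Nat.lt_succ_self m) _ h (hbb m)
  have fact1 : ∀ m x, (x = bb m ∨ G.Adj (bb m) x) → x ∉ A (m + 2) := by
    rintro m x (rfl | hadj) hx
    · exact hbbNot m (hsub (Nat.le_succ (m + 1)) hx)
    · exact hbbNot m (hAdjIn (m + 1) x hx (bb m) hadj.symm)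
  have fact2 : ∀ i m, i + 2 ≤ m → ∀ x, (x = bb m ∨ G.Adj (bb m) x) → x ∈ A (i + 1) := by
    rintro i m hm x (rfl | hadj)
    · exact hsub (by omega) (hbbA m)
    · exact hAdjIn (i + 1) (bb m) (hsub hm (hbbA m)) x hadj
  have fact3 : ∀ m m', m + 3 ≤ m' → ∀ x, (x = bb m ∨ G.Adj (bb m) x) →
      (x = bb m' ∨ G.Adj (bb m') x) → False := by
    intro m m' h x h1 h2
    exact fact1 m x h1 (fact2 (m + 1) m' (by omega) x h2)
  -- the construction
  set e : ℕ → ℕ := fun i => (eBoundary G (A i)).ncard with he_def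
  set idx : ℕ → ℕ := idxF e with hidx_def
  set nn : ℕ → ℕ := fun j => (j + 1) * e (idx j) with hnn_def
  have hidx_succ : ∀ j, idx (j + 1) = idx j + 3 * nn j + 3 := fun j => idxF_succ e j
  set lev : ℕ → ℕ → ℕ := fun j t => idx j + 2 + 3 * t with hlev_def
  set FF : ℕ → Finset V := fun j => (Finset.range (nn j)).image (fun t => bb (lev j t))
    with hFF_def
  set A' : ℕ → Set V := fun j => A (idx j) \ ↑(FF j) with hA'_def
  have hmemFF : ∀ j v, v ∈ FF j ↔ ∃ t, t < nn j ∧ v = bb (lev j t) := by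
    intro j v
    simp only [hFF_def, Finset.mem_image, Finset.mem_range]
    constructor
    · rintro ⟨t, ht, rfl⟩; exact ⟨t, ht, rfl⟩
    · rintro ⟨t, ht, rfl⟩; exact ⟨t, ht, rfl⟩
  have hlev_ge : ∀ j t, idx j + 2 ≤ lev j t := by intro j t; simp only [hlev_def]; omega
  have hFFA : ∀ j v, v ∈ FF j → ∀ x, (x = v ∨ G.Adj v x) → x ∈ A (idx j + 1) := by
    intro j v hv x hx
    obtain ⟨t, ht, rfl⟩ := (hmemFF j v).mp hv
    exact fact2 (idx j) (lev j t) (hlev_ge j t) x hx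
  have hFFdisj : ∀ j v w, v ∈ FF j → w ∈ FF j → v ≠ w → ∀ x,
      (x = v ∨ G.Adj v x) → (x = w ∨ G.Adj w x) → False := by
    intro j v w hv hw hvw x h1 h2
    obtain ⟨t, ht, rfl⟩ := (hmemFF j v).mp hv
    obtain ⟨t', ht', rfl⟩ := (hmemFF j w).mp hw
    have htt : t ≠ t' := fun h => hvw (by rw [h])
    rcases Nat.lt_or_ge t t' with hlt | hge
    · exact fact3 (lev j t) (lev j t') (by simp only [hlev_def]; omega) x h1 h2
    · have hlt : t' < t := by omega
      exact fact3 (lev j t') (lev j t) (by simp only [hlev_def]; omega) x h2 h1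
  have hFFnotin : ∀ j v x, v ∈ FF j → G.Adj v x → x ∉ FF j := by
    intro j v x hv hadj hx
    exact hFFdisj j v x hv hx hadj.ne x (Or.inr hadj) (Or.inl rfl)
  have hbbinj : ∀ j, ∀ t ∈ Finset.range (nn j), ∀ t' ∈ Finset.range (nn j),
      bb (lev j t) = bb (lev j t') → t = t' := by
    intro j t _ t' _ h
    by_contra htt
    rcases Nat.lt_or_ge t t' with hlt | hge
    · exact fact3 (lev j t) (lev j t') (by simp only [hlev_def]; omega)
        (bb (lev j t)) (Or.inl rfl) (Or.inl h)
    · have hlt : t' < t := by omega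
      exact fact3 (lev j t') (lev j t) (by simp only [hlev_def]; omega)
        (bb (lev j t)) (Or.inl h) (Or.inl rfl)
  -- finiteness of edge boundaries and positivity
  have heBfin : ∀ i, (eBoundary G (A i)).Finite := fun i => eB_finite' G hlf _ (hreg i).1
  have he1 : ∀ i, 1 ≤ e i := by
    intro i
    have h1 : 0 < (vBoundary G (A i)).ncard := (Set.ncard_pos (hreg i).1).mpr (hreg i).2.1
    have h2 := vB_ncard_le_eB' G (A i) (heBfin i)
    simp only [he_def]
    omega
  set ss : ℕ → ℕ := fun j => ∑ v ∈ FF j, (G.neighborSet v).ncard with hss_def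
  have hdd1 : ∀ m, 1 ≤ (G.neighborSet (bb m)).ncard := by
    intro m
    obtain ⟨y, _, hadj⟩ := (hbb m).2
    exact (Set.ncard_pos (hlf _)).mpr ⟨y, hadj⟩
  have hns : ∀ j, nn j ≤ ss j := by
    intro j
    have h1 : ss j = ∑ t ∈ Finset.range (nn j), (G.neighborSet (bb (lev j t))).ncard := by
      simp only [hss_def, hFF_def]
      exact Finset.sum_image (hbbinj j)
    calc nn j = ∑ _t ∈ Finset.range (nn j), 1 := by simp
      _ ≤ ∑ t ∈ Finset.range (nn j), (G.neighborSet (bb (lev j t))).ncard :=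
          Finset.sum_le_sum fun t _ => hdd1 _
      _ = ss j := h1.symm
  -- vertex boundary of the modified regions
  have hvB1 : ∀ j, vBoundary G (A (idx j)) ⊆ vBoundary G (A' j) := by
    intro j x hx
    have hxF : x ∉ FF j := fun hxF =>
      hDisjB (idx j) (idx j + 1) (Nat.lt_succ_self _) x (hFFA j x hxF x (Or.inl rfl)) hx
    obtain ⟨y, hy, hadj⟩ := hx.2
    exact ⟨⟨hx.1, fun h => hxF (Finset.mem_coe.mp h)⟩, y, fun h => hy h.1, hadj⟩
  have hvB2 : ∀ j x, x ∈ vBoundary G (A' j) →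
      x ∈ vBoundary G (A (idx j)) ∨ ∃ v ∈ FF j, G.Adj v x := by
    rintro j x ⟨⟨hxA, hxF⟩, y, hy, hadj⟩
    by_cases hyA : y ∈ A (idx j)
    · right
      have hyF : y ∈ FF j := by
        by_contra hyF
        exact hy ⟨hyA, fun hc => hyF (Finset.mem_coe.mp hc)⟩
      exact ⟨y, hyF, hadj.symm⟩
    · exact Or.inl ⟨hxA, y, hyA, hadj⟩
  have hvBfin : ∀ j, (vBoundary G (A' j)).Finite := by
    intro j
    refine Set.Finite.subset ((hreg (idx j)).1.union
      ((FF j).finite_toSet.biUnion fun v _ => hlf v)) ?_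
    intro x hx
    rcases hvB2 j x hx with h | ⟨v, hv, hadj⟩
    · exact Or.inl h
    · exact Or.inr (Set.mem_biUnion (Finset.mem_coe.mpr hv) hadj)
  have hvB3 : ∀ j v x, v ∈ FF j → G.Adj v x → x ∈ vBoundary G (A' j) := by
    intro j v x hv hadj
    have hxA : x ∈ A (idx j) := hsub (Nat.le_succ _) (hFFA j v hv x (Or.inr hadj))
    have hxF : x ∉ FF j := hFFnotin j v x hv hadj
    exact ⟨⟨hxA, fun h => hxF (Finset.mem_coe.mp h)⟩, v,
      fun h => h.2 (Finset.mem_coe.mpr hv), hadj.symm⟩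
  -- cardinality estimates
  have hssb : ∀ j, ss j ≤ (vBoundary G (A' j)).ncard := by
    intro j
    set Nf : Finset V := (FF j).biUnion fun v => (hlf v).toFinset with hNf_def
    have hdisj : ∀ v ∈ FF j, ∀ w ∈ FF j, v ≠ w →
        Disjoint ((hlf v).toFinset) ((hlf w).toFinset) := by
      intro v hv w hw hvw
      rw [Finset.disjoint_left]
      intro x hxv hxw
      exact hFFdisj j v w hv hw hvw x
        (Or.inr ((hlf v).mem_toFinset.mp hxv))
        (Or.inr ((hlf w).mem_toFinset.mp hxw))
    have hcard : Nf.card = ss j := by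
      rw [hNf_def, Finset.card_biUnion hdisj]
      exact Finset.sum_congr rfl fun v _ => (Set.ncard_eq_toFinset_card _ (hlf v)).symm
    have hsubN : (Nf : Set V) ⊆ vBoundary G (A' j) := by
      intro x hx
      obtain ⟨v, hv, hxv⟩ := Finset.mem_biUnion.mp (Finset.mem_coe.mp hx)
      exact hvB3 j v x hv ((hlf v).mem_toFinset.mp hxv)
    calc ss j = Nf.card := hcard.symm
      _ = (Nf : Set V).ncard := (Set.ncard_coe_finset Nf).symm
      _ ≤ (vBoundary G (A' j)).ncard := Set.ncard_le_ncard hsubN (hvBfin j)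
  have heB' : ∀ j, (eBoundary G (A' j)).ncard ≤ e (idx j) + ss j := by
    intro j
    set Ef : Finset (Sym2 V) := (heBfin (idx j)).toFinset ∪
      ((FF j).biUnion fun v => (hlf v).toFinset.image fun y => s(v, y)) with hEf_def
    have hsubE : eBoundary G (A' j) ⊆ (Ef : Set (Sym2 V)) := by
      rintro ed ⟨x, y, hx, hy, hadj, rfl⟩
      rw [Finset.coe_union]
      by_cases hyA : y ∈ A (idx j)
      · have hyF : y ∈ FF j := by
          by_contra hyF
          exact hy ⟨hyA, fun hc => hyF (Finset.mem_coe.mp hc)⟩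
        refine Or.inr (Finset.mem_coe.mpr (Finset.mem_biUnion.mpr ⟨y, hyF, ?_⟩))
        exact Finset.mem_image.mpr ⟨x, (hlf y).mem_toFinset.mpr hadj.symm, Sym2.eq_swap⟩
      · exact Or.inl (Finset.mem_coe.mpr ((heBfin (idx j)).mem_toFinset.mpr
          ⟨x, y, hx.1, hyA, hadj, rfl⟩))
    have h1 : (eBoundary G (A' j)).ncard ≤ Ef.card := by
      calc (eBoundary G (A' j)).ncard ≤ (Ef : Set (Sym2 V)).ncard :=
            Set.ncard_le_ncard hsubE Ef.finite_toSet
        _ = Ef.card := Set.ncard_coe_finset Ef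
    have h2 : Ef.card ≤ e (idx j) + ss j := by
      calc Ef.card ≤ (heBfin (idx j)).toFinset.card +
            ((FF j).biUnion fun v => (hlf v).toFinset.image fun y => s(v, y)).card :=
            Finset.card_union_le _ _
        _ ≤ e (idx j) + ss j := by
            gcongr
            · exact le_of_eq (Set.ncard_eq_toFinset_card _ (heBfin (idx j))).symm
            · calc ((FF j).biUnion fun v => (hlf v).toFinset.image fun y => s(v, y)).card
                  ≤ ∑ v ∈ FF j, ((hlf v).toFinset.image fun y => s(v, y)).card :=
                    Finset.card_biUnion_le
                _ ≤ ss j := Finset.sum_le_sum fun v _ => le_trans Finset.card_image_le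
                    (le_of_eq (Set.ncard_eq_toFinset_card _ (hlf v)).symm)
    exact le_trans h1 h2
  have hb1 : ∀ j, 1 ≤ (vBoundary G (A' j)).ncard := by
    intro j
    have := (Set.ncard_pos (hvBfin j)).mpr ⟨bb (idx j), hvB1 j (hbb (idx j))⟩
    omega
  have hbe' : ∀ j, (vBoundary G (A' j)).ncard ≤ (eBoundary G (A' j)).ncard :=
    fun j => vB_ncard_le_eB' G _ (eB_finite' G hlf _ (hvBfin j))
  -- the ratio
  have hbr : ∀ j, bratio G (A' j) =
      ((eBoundary G (A' j)).ncard : ℝ≥0∞) / ((vBoundary G (A' j)).ncard : ℝ≥0∞) := by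
    intro j
    have hef : (eBoundary G (A' j)).Finite := eB_finite' G hlf _ (hvBfin j)
    rw [bratio, hef.encard_eq_coe_toFinset_card, (hvBfin j).encard_eq_coe_toFinset_card,
      ← Set.ncard_eq_toFinset_card _ hef, ← Set.ncard_eq_toFinset_card _ (hvBfin j)]
    simp
  have hlow : ∀ j, 1 ≤ bratio G (A' j) := by
    intro j
    rw [hbr j]
    exact nat_one_le_div' (by have := hb1 j; omega) (hbe' j)
  have hhigh : ∀ j, bratio G (A' j) ≤ 1 + (j : ℝ≥0∞)⁻¹ := by
    intro j
    rw [hbr j]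
    apply nat_div_le_one_add_inv' (by have := hb1 j; omega)
    have h1 := heB' j
    have h2 := hns j
    have h3 := hssb j
    have h4 : (j + 1) * e (idx j) ≤ ss j := hns j
    set b' := (vBoundary G (A' j)).ncard
    set e' := (eBoundary G (A' j)).ncard
    set e0 := e (idx j)
    set s0 := ss j
    calc e' * j ≤ (e0 + s0) * j := Nat.mul_le_mul_right _ h1
      _ = e0 * j + s0 * j := Nat.add_mul _ _ _
      _ ≤ s0 + s0 * j := by
          have : e0 * j ≤ s0 := le_trans (by nlinarith) h4
          omega
      _ = s0 * (j + 1) := by ring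
      _ ≤ b' * (j + 1) := Nat.mul_le_mul_right _ h3
  -- nesting of the modified regions
  have hA'aux : ∀ j x, x ∈ A (idx (j + 1)) → x ∈ A' j ∧ x ∉ vBoundary G (A' j) := by
    intro j x hx
    have hxidx : x ∈ A (idx j) := hsub (by rw [hidx_succ]; omega) hx
    have hxF : x ∉ FF j := by
      intro hxF
      obtain ⟨t, ht, hxe⟩ := (hmemFF j x).mp hxF
      subst hxe
      refine hbbNot (lev j t) (hsub ?_ hx)
      rw [hidx_succ]
      simp only [hlev_def]
      omega
    have hxB : x ∉ vBoundary G (A' j) := by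
      intro hB
      rcases hvB2 j x hB with h | ⟨v, hv, hadj⟩
      · exact hDisjB (idx j) (idx (j + 1)) (by rw [hidx_succ]; omega) x hx h
      · obtain ⟨t, ht, hve⟩ := (hmemFF j v).mp hv
        subst hve
        refine fact1 (lev j t) x (Or.inr hadj) (hsub ?_ hx)
        rw [hidx_succ]
        simp only [hlev_def]
        omega
    exact ⟨⟨hxidx, fun h => hxF (Finset.mem_coe.mp h)⟩, hxB⟩
  have hnest' : ∀ j, A' (j + 1) ⊆ A' j \ vBoundary G (A' j) := by
    intro j x hx
    obtain ⟨h1, h2⟩ := hA'aux j x hx.1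
    exact ⟨h1, h2⟩
  have hray' : ∀ j, ∃ f, IsRay G f ∧ Set.range f ⊆ A' j ∧ EquivRay G f r := by
    intro j
    obtain ⟨f, hf1, hf2, hf3⟩ := (hreg (idx (j + 1))).2.2
    exact ⟨f, hf1, fun x hx => (hA'aux j x (hf2 hx)).1, hf3⟩
  have hmono' : ∀ {j k : ℕ}, j ≤ k → A' k ⊆ A' j := by
    intro j k h
    induction h with
    | refl => exact subset_rfl
    | step h ih => exact fun x hx => ih ((hnest' _ hx).1)
  have hinj' : Function.Injective A' := by
    have hstr : ∀ j k, j < k → A' j ≠ A' k := by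
      intro j k hjk heq
      have hx : bb (idx j) ∈ vBoundary G (A' j) := hvB1 j (hbb (idx j))
      have hx1 : bb (idx j) ∈ A' k := heq ▸ hx.1
      exact (hnest' j (hmono' hjk hx1)).2 hx
    intro j k h
    rcases lt_trichotomy j k with hlt | heq | hlt
    · exact absurd h (hstr j k hlt)
    · exact heq
    · exact absurd h.symm (hstr k j hlt)
  -- liminf computation
  have hlim : Filter.atTop.liminf (fun j => bratio G (A' j)) = 1 := by
    apply le_antisymm
    · have htend : Filter.Tendsto (fun j : ℕ => (1 : ℝ≥0∞) + (j : ℝ≥0∞)⁻¹)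
          Filter.atTop (nhds 1) := by
        have := Filter.Tendsto.add (tendsto_const_nhds (x := (1 : ℝ≥0∞))
          (f := Filter.atTop (α := ℕ))) ENNReal.tendsto_inv_nat_nhds_zero
        simpa using this
      calc Filter.atTop.liminf (fun j => bratio G (A' j))
          ≤ Filter.atTop.liminf (fun j : ℕ => (1 : ℝ≥0∞) + (j : ℝ≥0∞)⁻¹) :=
            Filter.liminf_le_liminf (Filter.Eventually.of_forall hhigh)
        _ = 1 := htend.liminf_eq
    · calc (1 : ℝ≥0∞) = Filter.atTop.liminf (fun _ : ℕ => (1 : ℝ≥0∞)) :=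
            (Filter.liminf_const 1).symm
        _ ≤ Filter.atTop.liminf (fun j => bratio G (A' j)) :=
            Filter.liminf_le_liminf (Filter.Eventually.of_forall hlow)
  exact ⟨A', hinj', fun j => ⟨hvBfin j, hray' j⟩, hnest',
    fun j => ⟨idx j, ↑(FF j), (FF j).finite_toSet, rfl⟩, hlim⟩

end Paper
end
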